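/- arXiv:2212.09279 — 10 statements merged into one kernel-verified Lean document; each statement's English description precedes it below -/
import Mathlib

section
/- Let 𝓕 be a finite nonempty union-closed family of finite sets with ∅ ∉ 𝓕, let k be the size of a smallest set of 𝓕 and n the size of the largest set of 𝓕, and let f be the number of abundant elements for 𝓕. Then f ≥ min { n, 2k − n + 1 }. -/
/-- A family of finite sets (of naturals) is union-closed. -/
def UnionClosed (F : Finset (Finset ℕ)) : Prop :=
  ∀ A ∈ F, ∀ B ∈ F, A ∪ B ∈ F

/-- An element `x` is abundant for `F` if it belongs to more than half of the sets of `F`. -/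
def Abundant (F : Finset (Finset ℕ)) (x : ℕ) : Prop :=
  2 * (F.filter (fun A => x ∈ A)).card > F.card

instance (F : Finset (Finset ℕ)) : DecidablePred (Abundant F) := fun x =>
  inferInstanceAs (Decidable (2 * (F.filter (fun A => x ∈ A)).card > F.card))

/-- `F` is twin-free: for every two distinct elements of the union of all its sets,
some set of `F` contains exactly one of them. -/
def TwinFree (F : Finset (Finset ℕ)) : Prop :=
  ∀ a ∈ F.sup id, ∀ b ∈ F.sup id, a ≠ b → ∃ A ∈ F, (A ∩ {a, b}).card = 1

/-- `F` is an `(f,k,n)`-construction: it is a nonempty union-closed family with exactly `f`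
abundant elements, a smallest set of size `k`, and the largest set (the union) of size `n`. -/
def IsConstruction (F : Finset (Finset ℕ)) (f k n : ℕ) : Prop :=
  F.Nonempty ∧ UnionClosed F ∧
  ((F.sup id).filter (Abundant F)).card = f ∧
  (∃ S ∈ F, S.card = k) ∧ (∀ A ∈ F, k ≤ A.card) ∧
  (F.sup id).card = n

theorem abundance_averaging (F : Finset (Finset ℕ)) (hF : F.Nonempty)
    (hUC : UnionClosed F) (hE : (∅ : Finset ℕ) ∉ F) (k n f : ℕ)
    (hk₁ : ∃ S ∈ F, S.card = k) (hk₂ : ∀ A ∈ F, k ≤ A.card)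
    (hn : (F.sup id).card = n)
    (hf : ((F.sup id).filter (Abundant F)).card = f) :
    (f : ℤ) ≥ min (n : ℤ) (2 * (k : ℤ) - (n : ℤ) + 1) := by
  classical
  set U := F.sup id with hUdef
  have hUF : U ∈ F := by
    have := Finset.sup'_mem (↑F : Set (Finset ℕ))
      (fun x hx y hy => hUC x hx y hy) F hF id (fun i hi => hi)
    rwa [Finset.sup'_eq_sup] at this
  have hsub : ∀ A ∈ F, A ⊆ U := fun A hA => Finset.le_sup (f := id) hA
  -- case n ≤ k : F = {U}
  by_cases hnk : n ≤ k
  · have hFU : F = {U} := by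
      apply Finset.eq_singleton_iff_unique_mem.2
      refine ⟨hUF, fun A hA => ?_⟩
      exact Finset.eq_of_subset_of_card_le (hsub A hA) (by rw [hn]; exact hnk.trans (hk₂ A hA))
    have hfn : f = n := by
      rw [← hf, ← hn]
      congr 1
      apply Finset.filter_true_of_mem
      intro x hx
      simp only [Abundant, hFU]
      rw [Finset.filter_singleton]
      simp [hx]
    rw [hfn]
    exact min_le_left _ _
  push_neg at hnk
  -- main counting
  set m := F.card with hm
  have hm1 : 1 ≤ m := Finset.card_pos.2 hF
  set d : ℕ → ℕ := fun x => (F.filter (fun A => x ∈ A)).card with hd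
  have hB : ∑ A ∈ F, A.card = ∑ x ∈ U, d x := by
    have : ∀ A ∈ F, A.card = ∑ x ∈ U, (if x ∈ A then 1 else 0) := by
      intro A hA
      rw [← Finset.card_filter]
      simp [Finset.filter_mem_eq_inter, Finset.inter_eq_right.2 (hsub A hA)]
    rw [Finset.sum_congr rfl this, Finset.sum_comm]
    refine Finset.sum_congr rfl fun x hx => ?_
    rw [← Finset.card_filter]
  have hA : k * (m - 1) + n ≤ ∑ A ∈ F, A.card := by
    rw [← Finset.add_sum_erase F _ hUF, hn]
    have : k * (m - 1) ≤ ∑ A ∈ F.erase U, A.card := by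
      rw [← Finset.card_erase_of_mem hUF]
      calc k * (F.erase U).card = ∑ _A ∈ F.erase U, k := by rw [Finset.sum_const, mul_comm]; rfl
        _ ≤ _ := Finset.sum_le_sum fun A hA => hk₂ A (Finset.mem_of_mem_erase hA)
    omega
  have hC : 2 * ∑ x ∈ U, d x ≤ 2 * f * m + (n - f) * m := by
    have hsplit : U = U.filter (Abundant F) ∪ U.filter (fun x => ¬ Abundant F x) :=
      (Finset.filter_union_filter_not_eq _ U).symm
    rw [hsplit, Finset.sum_union (Finset.disjoint_filter_filter_not U U _), mul_add]
    have h1 : 2 * ∑ x ∈ U.filter (Abundant F), d x ≤ 2 * f * m := by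
      rw [mul_assoc]
      refine Nat.mul_le_mul_left 2 ?_
      calc ∑ x ∈ U.filter (Abundant F), d x ≤ ∑ _x ∈ U.filter (Abundant F), m :=
            Finset.sum_le_sum fun x _ => Finset.card_filter_le _ _
        _ = f * m := by rw [Finset.sum_const, hf]; rfl
    have h2 : 2 * ∑ x ∈ U.filter (fun x => ¬ Abundant F x), d x ≤ (n - f) * m := by
      rw [Finset.mul_sum]
      calc ∑ x ∈ U.filter (fun x => ¬ Abundant F x), 2 * d x
          ≤ ∑ _x ∈ U.filter (fun x => ¬ Abundant F x), m := by
            refine Finset.sum_le_sum fun x hx => ?_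
            have := (Finset.mem_filter.1 hx).2
            simpa [Abundant, not_lt, hd] using this
        _ = (n - f) * m := by
            rw [Finset.sum_const, smul_eq_mul]
            congr 1
            have := Finset.card_filter_add_card_filter_not (s := U) (p := Abundant F)
            omega
    omega
  have hfn : f ≤ n := by rw [← hf, ← hn]; exact Finset.card_filter_le _ _
  -- combine over ℤ
  have key : (2:ℤ) * (k * (m-1) + n) ≤ (f + n) * m := by
    have h1 : (k * (m - 1) + n : ℤ) ≤ ∑ A ∈ F, (A.card : ℤ) := by
      push_cast [← Nat.cast_sum]
      have : ((k * (m-1) + n : ℕ) : ℤ) ≤ ((∑ A ∈ F, A.card : ℕ) : ℤ) := Int.ofNat_le.2 hA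
      push_cast at this
      rw [Nat.cast_sub hm1] at this
      convert this using 3 <;> push_cast <;> ring
    have h2 : (2:ℤ) * ∑ x ∈ U, (d x : ℤ) ≤ 2 * f * m + (n - f) * m := by
      have := Int.ofNat_le.2 hC
      push_cast at this
      rw [Nat.cast_sub hfn] at this
      convert this using 2 <;> push_cast <;> ring
    have hBz : ∑ A ∈ F, (A.card : ℤ) = ∑ x ∈ U, (d x : ℤ) := by
      exact_mod_cast congrArg (Nat.cast : ℕ → ℤ) hB
    nlinarith [h1, h2, hBz]
  have hmz : (1:ℤ) ≤ m := by exact_mod_cast hm1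
  have hnkz : (k:ℤ) < n := by exact_mod_cast hnk
  have : (2*(k:ℤ) - n + 1) ≤ f := by nlinarith [key, hmz, hnkz]
  exact le_trans (min_le_right _ _) this
end

section
/- There exists a twin-free (2,3,8)-construction 𝓕 (a finite union-closed family of finite sets with exactly 2 abundant elements, smallest set of size 3, and largest set of size 8) such that moreover every non-abundant element of the largest set of 𝓕 belongs to strictly less than half of the sets of 𝓕, i.e. 2·|{A ∈ 𝓕 : x ∈ A}| < |𝓕| for every non-abundant element x. -/
def Gbig : Finset (Finset ℕ) := ({2,3,4,5,6,7} : Finset ℕ).powerset.erase ∅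
def G0 : Finset (Finset ℕ) := {{2,3},{2,4},{3,4},{2,3,4}}
def G1 : Finset (Finset ℕ) := {{5,6},{5,7},{6,7},{5,6,7}}

def myF : Finset (Finset ℕ) :=
  Gbig.image (fun S => {0,1} ∪ S) ∪ G0.image (fun S => {0} ∪ S) ∪ G1.image (fun S => {1} ∪ S)


lemma Gbig_closed : ∀ S ∈ Gbig, ∀ T ∈ Gbig, S ∪ T ∈ Gbig := by
  intro S hS T hT
  simp only [Gbig, Finset.mem_erase, Finset.mem_powerset] at *
  refine ⟨?_, Finset.union_subset hS.2 hT.2⟩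
  simp [Finset.union_eq_empty]
  intro h; exact absurd h hS.1

set_option maxRecDepth 100000 in
lemma G0_sub : ∀ S ∈ G0, S ∈ Gbig := by decide
set_option maxRecDepth 100000 in
lemma G1_sub : ∀ S ∈ G1, S ∈ Gbig := by decide
set_option maxRecDepth 100000 in
lemma G0_closed : ∀ S ∈ G0, ∀ T ∈ G0, S ∪ T ∈ G0 := by decide
set_option maxRecDepth 100000 in
lemma G1_closed : ∀ S ∈ G1, ∀ T ∈ G1, S ∪ T ∈ G1 := by decide

lemma pair_union (S T : Finset ℕ) : ({0,1} ∪ S) ∪ ({0,1} ∪ T) = {0,1} ∪ (S ∪ T) := by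
  ext x; simp
lemma pair_union01 (S T : Finset ℕ) : ({0,1} ∪ S) ∪ ({0} ∪ T) = {0,1} ∪ (S ∪ T) := by
  ext x; simp
lemma pair_union10 (S T : Finset ℕ) : ({0} ∪ S) ∪ ({0,1} ∪ T) = {0,1} ∪ (S ∪ T) := by
  ext x; simp; tauto
lemma pair_union01' (S T : Finset ℕ) : ({0,1} ∪ S) ∪ ({1} ∪ T) = {0,1} ∪ (S ∪ T) := by
  ext x; simp
lemma pair_union10' (S T : Finset ℕ) : ({1} ∪ S) ∪ ({0,1} ∪ T) = {0,1} ∪ (S ∪ T) := by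
  ext x; simp
lemma zero_union (S T : Finset ℕ) : ({0} ∪ S) ∪ ({0} ∪ T) = {0} ∪ (S ∪ T) := by
  ext x; simp
lemma one_union (S T : Finset ℕ) : ({1} ∪ S) ∪ ({1} ∪ T) = {1} ∪ (S ∪ T) := by
  ext x; simp
lemma cross_union (S T : Finset ℕ) : ({0} ∪ S) ∪ ({1} ∪ T) = {0,1} ∪ (S ∪ T) := by
  ext x; simp; tauto
lemma cross_union' (S T : Finset ℕ) : ({1} ∪ S) ∪ ({0} ∪ T) = {0,1} ∪ (S ∪ T) := by
  ext x; simp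

lemma mem_pair_part {S : Finset ℕ} (h : S ∈ Gbig) : {0,1} ∪ S ∈ myF := by
  simp only [myF, Finset.mem_union, Finset.mem_image]
  exact Or.inl (Or.inl ⟨S, h, rfl⟩)
lemma mem_zero_part {S : Finset ℕ} (h : S ∈ G0) : {0} ∪ S ∈ myF := by
  simp only [myF, Finset.mem_union, Finset.mem_image]
  exact Or.inl (Or.inr ⟨S, h, rfl⟩)
lemma mem_one_part {S : Finset ℕ} (h : S ∈ G1) : {1} ∪ S ∈ myF := by
  simp only [myF, Finset.mem_union, Finset.mem_image]
  exact Or.inr ⟨S, h, rfl⟩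

lemma myF_closed : UnionClosed myF := by
  intro A hA B hB
  simp only [myF, Finset.mem_union, Finset.mem_image] at hA hB
  rcases hA with (⟨S, hS, rfl⟩ | ⟨S, hS, rfl⟩) | ⟨S, hS, rfl⟩ <;>
    rcases hB with (⟨T, hT, rfl⟩ | ⟨T, hT, rfl⟩) | ⟨T, hT, rfl⟩
  · rw [pair_union]; exact mem_pair_part (Gbig_closed _ hS _ hT)
  · rw [pair_union01]; exact mem_pair_part (Gbig_closed _ hS _ (G0_sub _ hT))
  · rw [pair_union01']; exact mem_pair_part (Gbig_closed _ hS _ (G1_sub _ hT))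
  · rw [pair_union10]; exact mem_pair_part (Gbig_closed _ (G0_sub _ hS) _ hT)
  · rw [zero_union]; exact mem_zero_part (G0_closed _ hS _ hT)
  · rw [cross_union]; exact mem_pair_part (Gbig_closed _ (G0_sub _ hS) _ (G1_sub _ hT))
  · rw [pair_union10']; exact mem_pair_part (Gbig_closed _ (G1_sub _ hS) _ hT)
  · rw [cross_union']; exact mem_pair_part (Gbig_closed _ (G1_sub _ hS) _ (G0_sub _ hT))
  · rw [one_union]; exact mem_one_part (G1_closed _ hS _ hT)


set_option maxRecDepth 1000000 in
set_option maxHeartbeats 4000000 in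
theorem exists_238_construction :
    ∃ F : Finset (Finset ℕ), IsConstruction F 2 3 8 ∧ TwinFree F ∧
      ∀ x ∈ F.sup id, ¬ Abundant F x →
        2 * (F.filter (fun A => x ∈ A)).card < F.card := by
  refine ⟨myF, ⟨⟨{0,1,2}, by decide⟩, myF_closed, by decide, ⟨{0,2,3}, by decide, by decide⟩, by decide, by decide⟩, by unfold TwinFree; decide, by decide⟩
end

section
/- There exists a twin-free (3,4,9)-construction 𝓕 (a finite union-closed family of finite sets with exactly 3 abundant elements, smallest set of size 4, and largest set of size 9) such that moreover every non-abundant element of the largest set of 𝓕 belongs to strictly less than half of the sets of 𝓕, i.e. 2·|{A ∈ 𝓕 : x ∈ A}| < |𝓕| for every non-abundant element x. -/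
/-! ### The construction

Family on `{0,…,8}`: the "main block" consists of all sets `{0,1,2} ∪ T` with
`∅ ≠ T ⊆ {3,…,8}` (63 sets), together with two "separator" blocks
`{0,1} ∪ X` for `X ∈ {{3,4},{4,5},{3,5},{3,4,5}}` and
`{0,2} ∪ Y` for `Y ∈ {{6,7},{7,8},{6,8},{6,7,8}}`.
Total 71 sets; `0,1,2` are abundant (71,67,67), every other element lies in 35 < 71/2 sets. -/

def inner6 : Finset ℕ := {3, 4, 5, 6, 7, 8}

def F349main : Finset (Finset ℕ) :=
  (inner6.powerset.erase ∅).image (fun T => ({0, 1, 2} : Finset ℕ) ∪ T)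

def tri1 : Finset (Finset ℕ) := {{3, 4}, {4, 5}, {3, 5}, {3, 4, 5}}

def tri2 : Finset (Finset ℕ) := {{6, 7}, {7, 8}, {6, 8}, {6, 7, 8}}

def F349s1 : Finset (Finset ℕ) := tri1.image (fun X => ({0, 1} : Finset ℕ) ∪ X)

def F349s2 : Finset (Finset ℕ) := tri2.image (fun X => ({0, 2} : Finset ℕ) ∪ X)

def F349 : Finset (Finset ℕ) := F349main ∪ F349s1 ∪ F349s2

lemma mem_F349main {T : Finset ℕ} (h1 : T ⊆ inner6) (h2 : T ≠ ∅) :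
    ({0, 1, 2} : Finset ℕ) ∪ T ∈ F349main :=
  Finset.mem_image_of_mem _ (Finset.mem_erase.mpr ⟨h2, Finset.mem_powerset.mpr h1⟩)

lemma main_mem_F349 {A : Finset ℕ} (h : A ∈ F349main) : A ∈ F349 := by
  simp only [F349, Finset.mem_union]; tauto

lemma s1_mem_F349 {A : Finset ℕ} (h : A ∈ F349s1) : A ∈ F349 := by
  simp only [F349, Finset.mem_union]; tauto

lemma s2_mem_F349 {A : Finset ℕ} (h : A ∈ F349s2) : A ∈ F349 := by
  simp only [F349, Finset.mem_union]; tauto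

lemma tri1_closed : ∀ X ∈ tri1, ∀ Y ∈ tri1, X ∪ Y ∈ tri1 := by decide

lemma tri2_closed : ∀ X ∈ tri2, ∀ Y ∈ tri2, X ∪ Y ∈ tri2 := by decide

lemma tri1_sub : ∀ X ∈ tri1, X ⊆ inner6 ∧ X ≠ ∅ := by decide

lemma tri2_sub : ∀ X ∈ tri2, X ⊆ inner6 ∧ X ≠ ∅ := by decide

lemma union4 (s t u v : Finset ℕ) : (s ∪ t) ∪ (u ∪ v) = (s ∪ u) ∪ (t ∪ v) := by
  ext x; simp only [Finset.mem_union]; tauto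

/-- Main workhorse: if the "prefix" parts unite to `{0,1,2}` and the inner parts are
inner and not both empty, the union lies in the main block. -/
lemma combine {P Q : Finset ℕ} (hPQ : P ∪ Q = ({0, 1, 2} : Finset ℕ))
    {T X : Finset ℕ} (hT : T ⊆ inner6) (hX : X ⊆ inner6) (hne : T ≠ ∅) :
    (P ∪ T) ∪ (Q ∪ X) ∈ F349main := by
  rw [union4, hPQ]
  refine mem_F349main (Finset.union_subset hT hX) ?_
  intro hc
  exact hne (Finset.union_eq_empty.mp hc).1

theorem F349_unionClosed : UnionClosed F349 := by
  have hmm : (({0,1,2} : Finset ℕ)) ∪ ({0,1,2} : Finset ℕ) = ({0,1,2} : Finset ℕ) := by decide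
  have hm1 : (({0,1,2} : Finset ℕ)) ∪ ({0,1} : Finset ℕ) = ({0,1,2} : Finset ℕ) := by decide
  have h1m : (({0,1} : Finset ℕ)) ∪ ({0,1,2} : Finset ℕ) = ({0,1,2} : Finset ℕ) := by decide
  have hm2 : (({0,1,2} : Finset ℕ)) ∪ ({0,2} : Finset ℕ) = ({0,1,2} : Finset ℕ) := by decide
  have h2m : (({0,2} : Finset ℕ)) ∪ ({0,1,2} : Finset ℕ) = ({0,1,2} : Finset ℕ) := by decide
  have h12 : (({0,1} : Finset ℕ)) ∪ ({0,2} : Finset ℕ) = ({0,1,2} : Finset ℕ) := by decide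
  have h21 : (({0,2} : Finset ℕ)) ∪ ({0,1} : Finset ℕ) = ({0,1,2} : Finset ℕ) := by decide
  intro A hA B hB
  have hA' : A ∈ F349main ∨ A ∈ F349s1 ∨ A ∈ F349s2 := by
    simpa [F349, Finset.mem_union, or_assoc] using hA
  have hB' : B ∈ F349main ∨ B ∈ F349s1 ∨ B ∈ F349s2 := by
    simpa [F349, Finset.mem_union, or_assoc] using hB
  rcases hA' with hAm | hAs | hAs
  · obtain ⟨T, hT, rfl⟩ := Finset.mem_image.mp hAm
    have hT' := Finset.mem_erase.mp hT
    have hTi : T ⊆ inner6 := Finset.mem_powerset.mp hT'.2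
    rcases hB' with hBm | hBs | hBs
    · obtain ⟨S, hS, rfl⟩ := Finset.mem_image.mp hBm
      have hS' := Finset.mem_erase.mp hS
      exact main_mem_F349 (combine hmm hTi (Finset.mem_powerset.mp hS'.2) hT'.1)
    · obtain ⟨X, hX, rfl⟩ := Finset.mem_image.mp hBs
      exact main_mem_F349 (combine hm1 hTi (tri1_sub X hX).1 hT'.1)
    · obtain ⟨X, hX, rfl⟩ := Finset.mem_image.mp hBs
      exact main_mem_F349 (combine hm2 hTi (tri2_sub X hX).1 hT'.1)
  · obtain ⟨X, hX, rfl⟩ := Finset.mem_image.mp hAs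
    rcases hB' with hBm | hBs | hBs
    · obtain ⟨S, hS, rfl⟩ := Finset.mem_image.mp hBm
      have hS' := Finset.mem_erase.mp hS
      exact main_mem_F349
        (combine h1m (tri1_sub X hX).1 (Finset.mem_powerset.mp hS'.2) (tri1_sub X hX).2)
    · obtain ⟨Y, hY, rfl⟩ := Finset.mem_image.mp hBs
      have : (({0,1} : Finset ℕ) ∪ X) ∪ (({0,1} : Finset ℕ) ∪ Y)
          = ({0,1} : Finset ℕ) ∪ (X ∪ Y) := by rw [union4, Finset.union_self]
      rw [this]
      exact s1_mem_F349 (Finset.mem_image_of_mem _ (tri1_closed X hX Y hY))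
    · obtain ⟨Y, hY, rfl⟩ := Finset.mem_image.mp hBs
      exact main_mem_F349
        (combine h12 (tri1_sub X hX).1 (tri2_sub Y hY).1 (tri1_sub X hX).2)
  · obtain ⟨X, hX, rfl⟩ := Finset.mem_image.mp hAs
    rcases hB' with hBm | hBs | hBs
    · obtain ⟨S, hS, rfl⟩ := Finset.mem_image.mp hBm
      have hS' := Finset.mem_erase.mp hS
      exact main_mem_F349
        (combine h2m (tri2_sub X hX).1 (Finset.mem_powerset.mp hS'.2) (tri2_sub X hX).2)
    · obtain ⟨Y, hY, rfl⟩ := Finset.mem_image.mp hBs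
      exact main_mem_F349
        (combine h21 (tri2_sub X hX).1 (tri1_sub Y hY).1 (tri2_sub X hX).2)
    · obtain ⟨Y, hY, rfl⟩ := Finset.mem_image.mp hBs
      have : (({0,2} : Finset ℕ) ∪ X) ∪ (({0,2} : Finset ℕ) ∪ Y)
          = ({0,2} : Finset ℕ) ∪ (X ∪ Y) := by rw [union4, Finset.union_self]
      rw [this]
      exact s2_mem_F349 (Finset.mem_image_of_mem _ (tri2_closed X hX Y hY))

set_option maxRecDepth 100000 in
theorem exists_349_construction :
    ∃ F : Finset (Finset ℕ), IsConstruction F 3 4 9 ∧ TwinFree F ∧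
      ∀ x ∈ F.sup id, ¬ Abundant F x →
        2 * (F.filter (fun A => x ∈ A)).card < F.card := by
  refine ⟨F349, ⟨?_, F349_unionClosed, ?_, ?_, ?_, ?_⟩, ?_, ?_⟩
  · decide
  · decide
  · decide
  · decide
  · decide
  · unfold TwinFree; decide
  · decide
end

section
/- There exists a twin-free (4,5,9)-construction, i.e. a finite twin-free union-closed family of finite sets with exactly 4 abundant elements, whose smallest set has size 5 and whose largest set has size 9. -/
def myFam : Finset (Finset ℕ) :=
  {({1, 2, 3, 4, 5} : Finset ℕ),
    ({1, 2, 3, 4, 5, 6} : Finset ℕ),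
    ({1, 2, 3, 4, 5, 6, 7} : Finset ℕ),
    ({1, 2, 3, 4, 5, 6, 7, 8} : Finset ℕ),
    ({1, 2, 3, 4, 5, 6, 7, 8, 9} : Finset ℕ),
    ({1, 2, 3, 4, 5, 6, 7, 9} : Finset ℕ),
    ({1, 2, 3, 4, 5, 6, 8} : Finset ℕ),
    ({1, 2, 3, 4, 5, 6, 8, 9} : Finset ℕ),
    ({1, 2, 3, 4, 5, 6, 9} : Finset ℕ),
    ({1, 2, 3, 4, 5, 7} : Finset ℕ),
    ({1, 2, 3, 4, 5, 7, 8} : Finset ℕ),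
    ({1, 2, 3, 4, 5, 7, 8, 9} : Finset ℕ),
    ({1, 2, 3, 4, 5, 7, 9} : Finset ℕ),
    ({1, 2, 3, 4, 5, 8} : Finset ℕ),
    ({1, 2, 3, 4, 5, 8, 9} : Finset ℕ),
    ({1, 2, 3, 4, 5, 9} : Finset ℕ),
    ({1, 2, 3, 4, 6} : Finset ℕ),
    ({1, 2, 3, 4, 6, 7} : Finset ℕ),
    ({1, 2, 3, 4, 6, 7, 8} : Finset ℕ),
    ({1, 2, 3, 4, 6, 7, 8, 9} : Finset ℕ),
    ({1, 2, 3, 4, 6, 7, 9} : Finset ℕ),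
    ({1, 2, 3, 4, 6, 8} : Finset ℕ),
    ({1, 2, 3, 4, 6, 8, 9} : Finset ℕ),
    ({1, 2, 3, 4, 6, 9} : Finset ℕ),
    ({1, 2, 3, 4, 7} : Finset ℕ),
    ({1, 2, 3, 4, 7, 8} : Finset ℕ),
    ({1, 2, 3, 4, 7, 8, 9} : Finset ℕ),
    ({1, 2, 3, 4, 7, 9} : Finset ℕ),
    ({1, 2, 3, 4, 8} : Finset ℕ),
    ({1, 2, 3, 4, 8, 9} : Finset ℕ),
    ({1, 2, 3, 4, 9} : Finset ℕ),
    ({1, 2, 3, 5, 6} : Finset ℕ),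
    ({1, 2, 3, 5, 6, 7} : Finset ℕ),
    ({1, 2, 3, 5, 7} : Finset ℕ),
    ({1, 2, 3, 6, 7} : Finset ℕ),
    ({1, 2, 4, 7, 8} : Finset ℕ),
    ({1, 2, 4, 7, 8, 9} : Finset ℕ),
    ({1, 2, 4, 7, 9} : Finset ℕ),
    ({1, 3, 4, 6, 8} : Finset ℕ),
    ({1, 3, 4, 6, 8, 9} : Finset ℕ),
    ({1, 3, 4, 6, 9} : Finset ℕ),
    ({2, 3, 4, 5, 8} : Finset ℕ),
    ({2, 3, 4, 5, 8, 9} : Finset ℕ),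
    ({2, 3, 4, 5, 9} : Finset ℕ)}

set_option maxHeartbeats 4000000 in
set_option maxRecDepth 100000 in
theorem exists_459_construction :
    ∃ F : Finset (Finset ℕ), IsConstruction F 4 5 9 ∧ TwinFree F := by
  exact ⟨myFam, by unfold IsConstruction UnionClosed; decide, by unfold TwinFree; decide⟩
end

section
/- Let k and n be integers with n ≥ k ≥ 3 such that ∑_{i=k-1}^{⌊n/2⌋-1} C(⌊n/2⌋-1, i) > C(n-3, k-3) + C(⌊n/2⌋-2, k-2). Then there exists a twin-free (2,k,n)-construction, i.e. a finite twin-free union-closed family of finite sets with exactly 2 abundant elements, whose smallest set has size k and whose largest set has size n. -/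
open Finset

private lemma aux_card_ge (s : Finset ℕ) (t : ℕ) :
    (s.powerset.filter fun T => t ≤ T.card).card = ∑ i ∈ Icc t s.card, s.card.choose i := by
  have h : (s.powerset.filter fun T => t ≤ T.card)
      = (Icc t s.card).biUnion (fun i => s.powersetCard i) := by
    ext T
    simp only [mem_filter, mem_powerset, mem_biUnion, mem_Icc, mem_powersetCard]
    constructor
    · rintro ⟨h1, h2⟩; exact ⟨T.card, ⟨h2, card_le_card h1⟩, h1, rfl⟩
    · rintro ⟨i, ⟨hi1, _⟩, hTs, rfl⟩; exact ⟨hTs, hi1⟩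
  rw [h, card_biUnion]
  · exact Finset.sum_congr rfl fun i _ => card_powersetCard i s
  · intro a _ b _ hab
    simp only [disjoint_left, mem_powersetCard]
    rintro T ⟨_, rfl⟩ ⟨_, h2⟩; exact hab h2

private lemma aux_card_exact_le (s T : Finset ℕ) (hT : T ⊆ s) (k : ℕ) :
    (s.powerset.filter fun A => T ⊆ A ∧ A.card = k).card
      ≤ (s.card - T.card).choose (k - T.card) := by
  rw [← card_sdiff_of_subset hT, ← card_powersetCard (k - T.card) (s \ T)]
  apply card_le_card_of_injOn (fun A => A \ T)
  · intro A hA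
    simp only [mem_coe, mem_filter, mem_powerset] at hA
    obtain ⟨hAs, hTA, hcard⟩ := hA
    rw [mem_coe, mem_powersetCard]
    exact ⟨sdiff_subset_sdiff hAs Subset.rfl, by rw [card_sdiff_of_subset hTA, hcard]⟩
  · intro A hA B hB hAB
    simp only [mem_coe, mem_filter, mem_powerset] at hA hB
    simp only [] at hAB
    have : A \ T ∪ T = B \ T ∪ T := by rw [hAB]
    rwa [sdiff_union_of_subset hA.2.1, sdiff_union_of_subset hB.2.1] at this

private lemma aux_card_mem_ge (s : Finset ℕ) (a k : ℕ) (ha : a ∈ s) (hk : 1 ≤ k) :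
    (s.powerset.filter fun A => a ∈ A ∧ k ≤ A.card).card
      = ∑ i ∈ Icc (k - 1) (s.card - 1), (s.card - 1).choose i := by
  have h1 : (s.powerset.filter fun A => a ∈ A ∧ k ≤ A.card).card
      = ((s.erase a).powerset.filter fun T => k - 1 ≤ T.card).card := by
    apply card_bij (fun A _ => A.erase a)
    · intro A hA
      simp only [mem_filter, mem_powerset] at hA ⊢
      refine ⟨fun x hx => ?_, ?_⟩
      · rw [mem_erase] at hx ⊢; exact ⟨hx.1, hA.1 hx.2⟩
      · rw [card_erase_of_mem hA.2.1]; omega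
    · intro A hA B hB h
      simp only [mem_filter, mem_powerset] at hA hB
      rw [← insert_erase hA.2.1, ← insert_erase hB.2.1, h]
    · intro T hT
      simp only [mem_filter, mem_powerset] at hT
      refine ⟨insert a T, ?_, ?_⟩
      · simp only [mem_filter, mem_powerset]
        have haT : a ∉ T := fun h => (mem_erase.mp (hT.1 h)).1 rfl
        refine ⟨insert_subset ha (hT.1.trans (erase_subset a s)), mem_insert_self a T, ?_⟩
        rw [card_insert_of_notMem haT]; omega
      · rw [erase_insert (fun h => (mem_erase.mp (hT.1 h)).1 rfl)]
  rw [h1, aux_card_ge, card_erase_of_mem ha]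


theorem exists_twinfree_2kn_construction (k n : ℕ) (hk : 3 ≤ k) (hkn : k ≤ n)
    (hineq : (Finset.Icc (k - 1) (n / 2 - 1)).sum (fun i => Nat.choose (n / 2 - 1) i)
      > Nat.choose (n - 3) (k - 3) + Nat.choose (n / 2 - 2) (k - 2)) :
    ∃ F : Finset (Finset ℕ), IsConstruction F 2 k n ∧ TwinFree F := by
  set m := n / 2 with hmdef
  -- basic numeric facts
  have hm : k ≤ m := by
    by_contra h
    push_neg at h
    rw [Finset.Icc_eq_empty (by omega), Finset.sum_empty] at hineq
    omega
  have h2m : 2 * m ≤ n := by omega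
  have hm3 : 3 ≤ m := le_trans hk hm
  have hmn : m < n := by omega
  set F : Finset (Finset ℕ) := (range n).powerset.filter
    (fun S => k ≤ S.card ∧ ((0 ∈ S ∧ S ⊆ range m) ∨ (m ∈ S ∧ S ⊆ Ico m (2*m)) ∨
      (0 ∈ S ∧ m ∈ S))) with hFdef
  have hFmem : ∀ S : Finset ℕ, S ∈ F ↔ (S ⊆ range n ∧ k ≤ S.card ∧
      ((0 ∈ S ∧ S ⊆ range m) ∨ (m ∈ S ∧ S ⊆ Ico m (2*m)) ∨ (0 ∈ S ∧ m ∈ S))) := by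
    intro S
    simp only [hFdef, mem_filter, mem_powerset]
  have hIcoRange : Ico m (2*m) ⊆ range n := fun y hy => by
    rw [mem_range]; have := (mem_Ico.mp hy).2; omega
  have hRangeSub : range m ⊆ range n := by
    intro y hy; rw [mem_range] at hy ⊢; omega
  -- the two "pure half" families
  have hER : F.filter (fun S => (0:ℕ) ∉ S)
      = (Ico m (2*m)).powerset.filter (fun S => m ∈ S ∧ k ≤ S.card) := by
    ext S
    simp only [mem_filter, mem_powerset]
    constructor
    · rintro ⟨hSF, h0⟩
      rw [hFmem] at hSF
      obtain ⟨hsub, hcard, hP⟩ := hSF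
      rcases hP with ⟨h0', _⟩ | ⟨hmS, hSR⟩ | ⟨h0', _⟩
      · exact absurd h0' h0
      · exact ⟨hSR, hmS, hcard⟩
      · exact absurd h0' h0
    · rintro ⟨hsub, hmS, hcard⟩
      refine ⟨(hFmem S).mpr ⟨hsub.trans hIcoRange, hcard, Or.inr (Or.inl ⟨hmS, hsub⟩)⟩, ?_⟩
      intro h0
      have := (mem_Ico.mp (hsub h0)).1
      omega
  have hEL : F.filter (fun S => m ∉ S)
      = (range m).powerset.filter (fun S => 0 ∈ S ∧ k ≤ S.card) := by
    ext S
    simp only [mem_filter, mem_powerset]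
    constructor
    · rintro ⟨hSF, hmS⟩
      rw [hFmem] at hSF
      obtain ⟨hsub, hcard, hP⟩ := hSF
      rcases hP with ⟨h0', hSL⟩ | ⟨hm', _⟩ | ⟨_, hm'⟩
      · exact ⟨hSL, h0', hcard⟩
      · exact absurd hm' hmS
      · exact absurd hm' hmS
    · rintro ⟨hsub, h0S, hcard⟩
      refine ⟨(hFmem S).mpr ⟨hsub.trans hRangeSub, hcard, Or.inl ⟨h0S, hsub⟩⟩, ?_⟩
      intro hmS
      have := mem_range.mp (hsub hmS)
      omega
  have hcardER : (F.filter (fun S => (0:ℕ) ∉ S)).card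
      = ∑ i ∈ Icc (k - 1) (m - 1), (m - 1).choose i := by
    rw [hER, aux_card_mem_ge (Ico m (2*m)) m k (by rw [mem_Ico]; omega) (by omega),
      Nat.card_Ico]
    have : 2 * m - m = m := by omega
    rw [this]
  have hcardEL : (F.filter (fun S => m ∉ S)).card
      = ∑ i ∈ Icc (k - 1) (m - 1), (m - 1).choose i := by
    rw [hEL, aux_card_mem_ge (range m) 0 k (by rw [mem_range]; omega) (by omega), card_range]
  -- non-abundance of every x ∉ {0, m}
  have hnonab : ∀ x, x < n → x ≠ 0 → x ≠ m →
      (F.filter fun A => x ∈ A).card ≤ (F.filter fun A => x ∉ A).card := by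
    intro x hxn hx0 hxm
    classical
    set D1 := F.filter (fun A => x ∈ A ∧ k + 1 ≤ A.card) with hD1def
    set D2 := F.filter (fun A => x ∈ A ∧ A.card = k) with hD2def
    have hD12 : (F.filter fun A => x ∈ A).card = D1.card + D2.card := by
      have hu : F.filter (fun A => x ∈ A) = D1 ∪ D2 := by
        ext A
        simp only [hD1def, hD2def, mem_union, mem_filter]
        constructor
        · rintro ⟨hAF, hxA⟩
          have hcard := ((hFmem A).mp hAF).2.1
          by_cases hc : A.card = k
          · exact Or.inr ⟨hAF, hxA, hc⟩
          · exact Or.inl ⟨hAF, hxA, by omega⟩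
        · rintro (⟨h1, h2, _⟩ | ⟨h1, h2, _⟩) <;> exact ⟨h1, h2⟩
      rw [hu, card_union_of_disjoint]
      rw [disjoint_left]
      intro A hA1 hA2
      simp only [hD1def, hD2def, mem_filter] at hA1 hA2
      omega
    have hinj : ∀ G : Finset (Finset ℕ), (∀ A ∈ G, x ∈ A) →
        (G.image (fun A => A.erase x)).card = G.card := by
      intro G hG
      apply card_image_of_injOn
      intro A hA B hB hAB
      simp only [] at hAB
      rw [← insert_erase (hG A hA), ← insert_erase (hG B hB), hAB]
    have hD1x : ∀ A ∈ D1, x ∈ A := fun A hA => (mem_filter.mp hA).2.1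
    rcases (by omega : (x < m ∨ 2*m ≤ x) ∨ (m < x ∧ x < 2*m)) with hxc | hxc
    · -- case A : the opposite half is the pure right family
      have hD1e : ∀ A ∈ D1, 0 ∈ A.erase x ∧ A.erase x ∈ F := by
        intro A hA
        simp only [hD1def, mem_filter] at hA
        obtain ⟨hAF, hxA, hcard1⟩ := hA
        obtain ⟨hsub, hcard, hP⟩ := (hFmem A).mp hAF
        have hnotR : ¬ (m ∈ A ∧ A ⊆ Ico m (2*m)) := by
          rintro ⟨_, hsR⟩
          have := mem_Ico.mp (hsR hxA)
          omega
        have h0A : 0 ∈ A := by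
          rcases hP with ⟨h0, _⟩ | hR | ⟨h0, _⟩
          · exact h0
          · exact absurd hR hnotR
          · exact h0
        have h0e : 0 ∈ A.erase x := mem_erase.mpr ⟨Ne.symm hx0, h0A⟩
        refine ⟨h0e, (hFmem _).mpr ⟨(erase_subset x A).trans hsub, ?_, ?_⟩⟩
        · rw [card_erase_of_mem hxA]; omega
        · rcases hP with ⟨_, hsL⟩ | hR | ⟨_, hmA⟩
          · exact Or.inl ⟨h0e, (erase_subset x A).trans hsL⟩
          · exact absurd hR hnotR
          · exact Or.inr (Or.inr ⟨h0e, mem_erase.mpr ⟨Ne.symm hxm, hmA⟩⟩)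
      have hsubimg : D1.image (fun A => A.erase x) ⊆ F.filter (fun A => x ∉ A) := by
        intro B hB
        obtain ⟨A, hA, rfl⟩ := mem_image.mp hB
        exact mem_filter.mpr ⟨(hD1e A hA).2, notMem_erase x A⟩
      have hdisj : Disjoint (D1.image (fun A => A.erase x)) (F.filter (fun S => (0:ℕ) ∉ S)) := by
        rw [disjoint_left]
        intro B hB hB2
        obtain ⟨A, hA, rfl⟩ := mem_image.mp hB
        exact (mem_filter.mp hB2).2 (hD1e A hA).1
      have hoppE : F.filter (fun S => (0:ℕ) ∉ S) ⊆ F.filter (fun A => x ∉ A) := by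
        intro S hS
        obtain ⟨hSF, h0S⟩ := mem_filter.mp hS
        refine mem_filter.mpr ⟨hSF, ?_⟩
        obtain ⟨hsub, hcard, hP⟩ := (hFmem S).mp hSF
        rcases hP with ⟨h0, _⟩ | ⟨_, hsR⟩ | ⟨h0, _⟩
        · exact absurd h0 h0S
        · intro hxS; have := mem_Ico.mp (hsR hxS); omega
        · exact absurd h0 h0S
      -- bound on D2
      have hD2le : D2.card ≤ (m-2).choose (k-2) + (n-3).choose (k-3) := by
        set U1 := (range m).powerset.filter
          (fun A => ({0, x} : Finset ℕ) ⊆ A ∧ A.card = k) with hU1def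
        set U2 := (range n).powerset.filter
          (fun A => ({0, m, x} : Finset ℕ) ⊆ A ∧ A.card = k) with hU2def
        have hsub2 : D2 ⊆ U1 ∪ U2 := by
          intro A hA
          simp only [hD2def, mem_filter] at hA
          obtain ⟨hAF, hxA, hck⟩ := hA
          obtain ⟨hsub, hcard, hP⟩ := (hFmem A).mp hAF
          rcases hP with ⟨h0, hsL⟩ | ⟨_, hsR⟩ | ⟨h0, hmA⟩
          · refine mem_union_left _ (mem_filter.mpr ⟨mem_powerset.mpr hsL, ?_, hck⟩)
            rw [insert_subset_iff, singleton_subset_iff]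
            exact ⟨h0, hxA⟩
          · exfalso; have := mem_Ico.mp (hsR hxA); omega
          · refine mem_union_right _ (mem_filter.mpr ⟨mem_powerset.mpr hsub, ?_, hck⟩)
            rw [insert_subset_iff, insert_subset_iff, singleton_subset_iff]
            exact ⟨h0, hmA, hxA⟩
        have hU1 : U1.card ≤ (m-2).choose (k-2) := by
          rcases hxc with hxc' | hxc'
          · have hTsub : ({0, x} : Finset ℕ) ⊆ range m := by
              rw [insert_subset_iff, singleton_subset_iff, mem_range, mem_range]
              omega
            have := aux_card_exact_le (range m) {0, x} hTsub k
            rwa [card_range, card_pair (Ne.symm hx0)] at this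
          · have : U1 = ∅ := by
              rw [eq_empty_iff_forall_notMem]
              intro A hA
              simp only [hU1def, mem_filter, mem_powerset, insert_subset_iff,
                singleton_subset_iff] at hA
              have := mem_range.mp (hA.1 hA.2.1.2)
              omega
            simp [this]
        have hU2 : U2.card ≤ (n-3).choose (k-3) := by
          have hTsub : ({0, m, x} : Finset ℕ) ⊆ range n := by
            rw [insert_subset_iff, insert_subset_iff, singleton_subset_iff,
              mem_range, mem_range, mem_range]
            omega
          have hT3 : ({0, m, x} : Finset ℕ).card = 3 := by
            rw [card_insert_of_notMem, card_pair]
            · omega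
            · simp only [mem_insert, mem_singleton]
              push_neg
              omega
          have := aux_card_exact_le (range n) {0, m, x} hTsub k
          rwa [card_range, hT3] at this
        calc D2.card ≤ (U1 ∪ U2).card := card_le_card hsub2
          _ ≤ U1.card + U2.card := card_union_le U1 U2
          _ ≤ (m-2).choose (k-2) + (n-3).choose (k-3) := by omega
      have hD2lt : D2.card < (F.filter (fun S => (0:ℕ) ∉ S)).card := by
        rw [hcardER]; omega
      calc (F.filter fun A => x ∈ A).card = D1.card + D2.card := hD12
        _ ≤ (D1.image (fun A => A.erase x)).card + (F.filter (fun S => (0:ℕ) ∉ S)).card := by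
            rw [hinj D1 hD1x]; omega
        _ = (D1.image (fun A => A.erase x) ∪ F.filter (fun S => (0:ℕ) ∉ S)).card :=
            (card_union_of_disjoint hdisj).symm
        _ ≤ (F.filter fun A => x ∉ A).card := card_le_card (union_subset hsubimg hoppE)
    · -- case B : m < x < 2m, opposite half is the pure left family
      have hD1e : ∀ A ∈ D1, m ∈ A.erase x ∧ A.erase x ∈ F := by
        intro A hA
        simp only [hD1def, mem_filter] at hA
        obtain ⟨hAF, hxA, hcard1⟩ := hA
        obtain ⟨hsub, hcard, hP⟩ := (hFmem A).mp hAF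
        have hnotL : ¬ (0 ∈ A ∧ A ⊆ range m) := by
          rintro ⟨_, hsL⟩
          have := mem_range.mp (hsL hxA)
          omega
        have hmA : m ∈ A := by
          rcases hP with hL | ⟨hm', _⟩ | ⟨_, hm'⟩
          · exact absurd hL hnotL
          · exact hm'
          · exact hm'
        have hme : m ∈ A.erase x := mem_erase.mpr ⟨Ne.symm hxm, hmA⟩
        refine ⟨hme, (hFmem _).mpr ⟨(erase_subset x A).trans hsub, ?_, ?_⟩⟩
        · rw [card_erase_of_mem hxA]; omega
        · rcases hP with hL | ⟨_, hsR⟩ | ⟨h0, _⟩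
          · exact absurd hL hnotL
          · exact Or.inr (Or.inl ⟨hme, (erase_subset x A).trans hsR⟩)
          · exact Or.inr (Or.inr ⟨mem_erase.mpr ⟨Ne.symm hx0, h0⟩, hme⟩)
      have hsubimg : D1.image (fun A => A.erase x) ⊆ F.filter (fun A => x ∉ A) := by
        intro B hB
        obtain ⟨A, hA, rfl⟩ := mem_image.mp hB
        exact mem_filter.mpr ⟨(hD1e A hA).2, notMem_erase x A⟩
      have hdisj : Disjoint (D1.image (fun A => A.erase x)) (F.filter (fun S => m ∉ S)) := by
        rw [disjoint_left]
        intro B hB hB2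
        obtain ⟨A, hA, rfl⟩ := mem_image.mp hB
        exact (mem_filter.mp hB2).2 (hD1e A hA).1
      have hoppE : F.filter (fun S => m ∉ S) ⊆ F.filter (fun A => x ∉ A) := by
        intro S hS
        obtain ⟨hSF, hmS⟩ := mem_filter.mp hS
        refine mem_filter.mpr ⟨hSF, ?_⟩
        obtain ⟨hsub, hcard, hP⟩ := (hFmem S).mp hSF
        rcases hP with ⟨_, hsL⟩ | ⟨hm', _⟩ | ⟨_, hm'⟩
        · intro hxS; have := mem_range.mp (hsL hxS); omega
        · exact absurd hm' hmS
        · exact absurd hm' hmS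
      have hD2le : D2.card ≤ (m-2).choose (k-2) + (n-3).choose (k-3) := by
        set U1 := (Ico m (2*m)).powerset.filter
          (fun A => ({m, x} : Finset ℕ) ⊆ A ∧ A.card = k) with hU1def
        set U2 := (range n).powerset.filter
          (fun A => ({0, m, x} : Finset ℕ) ⊆ A ∧ A.card = k) with hU2def
        have hsub2 : D2 ⊆ U1 ∪ U2 := by
          intro A hA
          simp only [hD2def, mem_filter] at hA
          obtain ⟨hAF, hxA, hck⟩ := hA
          obtain ⟨hsub, hcard, hP⟩ := (hFmem A).mp hAF
          rcases hP with ⟨_, hsL⟩ | ⟨hm', hsR⟩ | ⟨h0, hmA⟩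
          · exfalso; have := mem_range.mp (hsL hxA); omega
          · refine mem_union_left _ (mem_filter.mpr ⟨mem_powerset.mpr hsR, ?_, hck⟩)
            rw [insert_subset_iff, singleton_subset_iff]
            exact ⟨hm', hxA⟩
          · refine mem_union_right _ (mem_filter.mpr ⟨mem_powerset.mpr hsub, ?_, hck⟩)
            rw [insert_subset_iff, insert_subset_iff, singleton_subset_iff]
            exact ⟨h0, hmA, hxA⟩
        have hU1 : U1.card ≤ (m-2).choose (k-2) := by
          have hTsub : ({m, x} : Finset ℕ) ⊆ Ico m (2*m) := by
            rw [insert_subset_iff, singleton_subset_iff, mem_Ico, mem_Ico]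
            omega
          have := aux_card_exact_le (Ico m (2*m)) {m, x} hTsub k
          rwa [Nat.card_Ico, card_pair (Ne.symm hxm),
            (by omega : 2 * m - m = m)] at this
        have hU2 : U2.card ≤ (n-3).choose (k-3) := by
          have hTsub : ({0, m, x} : Finset ℕ) ⊆ range n := by
            rw [insert_subset_iff, insert_subset_iff, singleton_subset_iff,
              mem_range, mem_range, mem_range]
            omega
          have hT3 : ({0, m, x} : Finset ℕ).card = 3 := by
            rw [card_insert_of_notMem, card_pair]
            · omega
            · simp only [mem_insert, mem_singleton]
              push_neg
              omega
          have := aux_card_exact_le (range n) {0, m, x} hTsub k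
          rwa [card_range, hT3] at this
        calc D2.card ≤ (U1 ∪ U2).card := card_le_card hsub2
          _ ≤ U1.card + U2.card := card_union_le U1 U2
          _ ≤ (m-2).choose (k-2) + (n-3).choose (k-3) := by omega
      have hD2lt : D2.card < (F.filter (fun S => m ∉ S)).card := by
        rw [hcardEL]; omega
      calc (F.filter fun A => x ∈ A).card = D1.card + D2.card := hD12
        _ ≤ (D1.image (fun A => A.erase x)).card + (F.filter (fun S => m ∉ S)).card := by
            rw [hinj D1 hD1x]; omega
        _ = (D1.image (fun A => A.erase x) ∪ F.filter (fun S => m ∉ S)).card :=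
            (card_union_of_disjoint hdisj).symm
        _ ≤ (F.filter fun A => x ∉ A).card := card_le_card (union_subset hsubimg hoppE)
  -- witnesses
  have hWL : range k ∈ F := (hFmem _).mpr ⟨range_subset_range.mpr hkn, by rw [card_range],
    Or.inl ⟨mem_range.mpr (by omega), range_subset_range.mpr hm⟩⟩
  have hWR : Ico m (m + k) ∈ F := by
    refine (hFmem _).mpr ⟨fun y hy => ?_, ?_, Or.inr (Or.inl ⟨mem_Ico.mpr (by omega),
      Ico_subset_Ico le_rfl (by omega)⟩)⟩
    · rw [mem_range]; have := (mem_Ico.mp hy).2; omega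
    · rw [Nat.card_Ico]; omega
  have hRn : range n ∈ F := (hFmem _).mpr ⟨Subset.rfl, by rw [card_range]; omega,
    Or.inr (Or.inr ⟨mem_range.mpr (by omega), mem_range.mpr hmn⟩)⟩
  have hERm : ∀ S ∈ F.filter (fun S => (0:ℕ) ∉ S), m ∈ S := by
    intro S hS
    obtain ⟨hSF, h0⟩ := mem_filter.mp hS
    rcases ((hFmem S).mp hSF).2.2 with ⟨h0', _⟩ | ⟨hm', _⟩ | ⟨h0', _⟩
    · exact absurd h0' h0
    · exact hm'
    · exact absurd h0' h0
  have hELz : ∀ S ∈ F.filter (fun S => m ∉ S), 0 ∈ S := by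
    intro S hS
    obtain ⟨hSF, hms⟩ := mem_filter.mp hS
    rcases ((hFmem S).mp hSF).2.2 with ⟨h0', _⟩ | ⟨hm', _⟩ | ⟨_, hm'⟩
    · exact h0'
    · exact absurd hm' hms
    · exact absurd hm' hms
  -- abundance of 0
  have hab0 : F.card < 2 * (F.filter fun A => (0:ℕ) ∈ A).card := by
    have hpart := card_filter_add_card_filter_not (s := F) (p := fun A => (0:ℕ) ∈ A)
    suffices h : (F.filter fun S => ¬ (0:ℕ) ∈ S).card < (F.filter fun A => (0:ℕ) ∈ A).card by
      omega
    set J := (F.filter fun S => ¬ (0:ℕ) ∈ S).image (insert 0) with hJdef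
    have hJcard : J.card = (F.filter fun S => ¬ (0:ℕ) ∈ S).card := by
      apply card_image_of_injOn
      intro A hA B hB hAB
      simp only [mem_coe, mem_filter] at hA hB
      rw [← erase_insert hA.2, ← erase_insert hB.2, hAB]
    have hJsub : insert (range k) J ⊆ F.filter (fun A => (0:ℕ) ∈ A) := by
      rw [insert_subset_iff]
      constructor
      · exact mem_filter.mpr ⟨hWL, mem_range.mpr (by omega)⟩
      · intro B hB
        obtain ⟨A, hA, rfl⟩ := mem_image.mp hB
        have hmA := hERm A hA
        obtain ⟨hAF, _⟩ := mem_filter.mp hA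
        obtain ⟨hsub, hcard, _⟩ := (hFmem A).mp hAF
        refine mem_filter.mpr ⟨(hFmem _).mpr ⟨insert_subset (mem_range.mpr (by omega)) hsub,
          le_trans hcard (card_le_card (subset_insert 0 A)), Or.inr (Or.inr
          ⟨mem_insert_self 0 A, mem_insert_of_mem hmA⟩)⟩, mem_insert_self 0 A⟩
    have hnot : range k ∉ J := by
      intro hmem
      obtain ⟨A, hA, hAB⟩ := mem_image.mp hmem
      have hmA := hERm A hA
      have : m ∈ range k := by rw [← hAB]; exact mem_insert_of_mem hmA
      have := mem_range.mp this
      omega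
    have := card_le_card hJsub
    rw [card_insert_of_notMem hnot, hJcard] at this
    omega
  -- abundance of m
  have habm : F.card < 2 * (F.filter fun A => m ∈ A).card := by
    have hpart := card_filter_add_card_filter_not (s := F) (p := fun A => m ∈ A)
    suffices h : (F.filter fun S => ¬ m ∈ S).card < (F.filter fun A => m ∈ A).card by
      omega
    set J := (F.filter fun S => ¬ m ∈ S).image (insert m) with hJdef
    have hJcard : J.card = (F.filter fun S => ¬ m ∈ S).card := by
      apply card_image_of_injOn
      intro A hA B hB hAB
      simp only [mem_coe, mem_filter] at hA hB
      rw [← erase_insert hA.2, ← erase_insert hB.2, hAB]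
    have hJsub : insert (Ico m (m + k)) J ⊆ F.filter (fun A => m ∈ A) := by
      rw [insert_subset_iff]
      constructor
      · exact mem_filter.mpr ⟨hWR, mem_Ico.mpr (by omega)⟩
      · intro B hB
        obtain ⟨A, hA, rfl⟩ := mem_image.mp hB
        have h0A := hELz A hA
        obtain ⟨hAF, _⟩ := mem_filter.mp hA
        obtain ⟨hsub, hcard, _⟩ := (hFmem A).mp hAF
        refine mem_filter.mpr ⟨(hFmem _).mpr ⟨insert_subset (mem_range.mpr hmn) hsub,
          le_trans hcard (card_le_card (subset_insert m A)), Or.inr (Or.inr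
          ⟨mem_insert_of_mem h0A, mem_insert_self m A⟩)⟩, mem_insert_self m A⟩
    have hnot : Ico m (m + k) ∉ J := by
      intro hmem
      obtain ⟨A, hA, hAB⟩ := mem_image.mp hmem
      have h0A := hELz A hA
      have : (0:ℕ) ∈ Ico m (m + k) := by rw [← hAB]; exact mem_insert_of_mem h0A
      have := mem_Ico.mp this
      omega
    have := card_le_card hJsub
    rw [card_insert_of_notMem hnot, hJcard] at this
    omega
  -- sup is range n
  have hsup : F.sup id = range n := by
    apply le_antisymm
    · exact Finset.sup_le fun S hS => ((hFmem S).mp hS).1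
    · exact le_sup (f := id) hRn
  -- union closed
  have hUC : UnionClosed F := by
    intro A hA B hB
    obtain ⟨hsubA, hcardA, hPA⟩ := (hFmem A).mp hA
    obtain ⟨hsubB, hcardB, hPB⟩ := (hFmem B).mp hB
    refine (hFmem _).mpr ⟨union_subset hsubA hsubB,
      le_trans hcardA (card_le_card subset_union_left), ?_⟩
    rcases hPA with ⟨a0, aL⟩ | ⟨am, aR⟩ | ⟨a0, am⟩ <;>
      rcases hPB with ⟨b0, bL⟩ | ⟨bm, bR⟩ | ⟨b0, bm⟩
    · exact Or.inl ⟨mem_union_left _ a0, union_subset aL bL⟩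
    · exact Or.inr (Or.inr ⟨mem_union_left _ a0, mem_union_right _ bm⟩)
    · exact Or.inr (Or.inr ⟨mem_union_left _ a0, mem_union_right _ bm⟩)
    · exact Or.inr (Or.inr ⟨mem_union_right _ b0, mem_union_left _ am⟩)
    · exact Or.inr (Or.inl ⟨mem_union_left _ am, union_subset aR bR⟩)
    · exact Or.inr (Or.inr ⟨mem_union_right _ b0, mem_union_left _ am⟩)
    · exact Or.inr (Or.inr ⟨mem_union_left _ a0, mem_union_left _ am⟩)
    · exact Or.inr (Or.inr ⟨mem_union_left _ a0, mem_union_left _ am⟩)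
    · exact Or.inr (Or.inr ⟨mem_union_left _ a0, mem_union_left _ am⟩)
  -- exactly the two abundant elements 0 and m
  have habsfilter : (range n).filter (Abundant F) = {0, m} := by
    ext x
    simp only [mem_filter, mem_range, mem_insert, mem_singleton]
    constructor
    · rintro ⟨hx, hab⟩
      by_contra hcon
      push_neg at hcon
      have h1 := hnonab x hx hcon.1 hcon.2
      have h2 := card_filter_add_card_filter_not (s := F) (p := fun A => x ∈ A)
      simp only [Abundant] at hab
      omega
    · rintro (rfl | rfl)
      · exact ⟨by omega, hab0⟩
      · exact ⟨hmn, habm⟩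
  have habscard : ((F.sup id).filter (Abundant F)).card = 2 := by
    rw [hsup, habsfilter, card_insert_of_notMem (by simp only [mem_singleton]; omega),
      card_singleton]
  -- twin-freeness
  have hcap1 : ∀ (A : Finset ℕ) (c d : ℕ), c ∈ A → d ∉ A → (A ∩ {c, d}).card = 1 := by
    intro A c d h1 h2
    have : A ∩ {c, d} = {c} := by
      ext y
      simp only [mem_inter, mem_insert, mem_singleton]
      constructor
      · rintro ⟨hy, rfl | rfl⟩
        · rfl
        · exact absurd hy h2
      · rintro rfl; exact ⟨h1, Or.inl rfl⟩
    rw [this, card_singleton]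
  have hcap2 : ∀ (A : Finset ℕ) (c d : ℕ), c ∉ A → d ∈ A → (A ∩ {c, d}).card = 1 := by
    intro A c d h1 h2
    have : A ∩ {c, d} = {d} := by
      ext y
      simp only [mem_inter, mem_insert, mem_singleton]
      constructor
      · rintro ⟨hy, rfl | rfl⟩
        · exact absurd hy h1
        · rfl
      · rintro rfl; exact ⟨h2, Or.inr rfl⟩
    rw [this, card_singleton]
  have hTF : TwinFree F := by
    intro a ha b hb hab
    rw [hsup, mem_range] at ha hb
    by_cases ha0 : a ≠ 0 ∧ a ≠ m
    · refine ⟨(range n).erase a, ?_, ?_⟩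
      · refine (hFmem _).mpr ⟨erase_subset a (range n), ?_, Or.inr (Or.inr
          ⟨mem_erase.mpr ⟨Ne.symm ha0.1, mem_range.mpr (by omega)⟩,
           mem_erase.mpr ⟨Ne.symm ha0.2, mem_range.mpr hmn⟩⟩)⟩
        rw [card_erase_of_mem (mem_range.mpr ha), card_range]
        omega
      · exact hcap2 _ a b (notMem_erase a _) (mem_erase.mpr ⟨Ne.symm hab, mem_range.mpr hb⟩)
    · by_cases hb0 : b ≠ 0 ∧ b ≠ m
      · refine ⟨(range n).erase b, ?_, ?_⟩
        · refine (hFmem _).mpr ⟨erase_subset b (range n), ?_, Or.inr (Or.inr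
            ⟨mem_erase.mpr ⟨Ne.symm hb0.1, mem_range.mpr (by omega)⟩,
             mem_erase.mpr ⟨Ne.symm hb0.2, mem_range.mpr hmn⟩⟩)⟩
          rw [card_erase_of_mem (mem_range.mpr hb), card_range]
          omega
        · exact hcap1 _ a b (mem_erase.mpr ⟨hab, mem_range.mpr ha⟩) (notMem_erase b _)
      · push_neg at ha0 hb0
        refine ⟨range k, hWL, ?_⟩
        have h0r : (0:ℕ) ∈ range k := mem_range.mpr (by omega)
        have hmr : m ∉ range k := fun h => by have := mem_range.mp h; omega
        rcases (by tauto : a = 0 ∨ a = m) with rfl | rfl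
        · rcases (by tauto : b = 0 ∨ b = m) with rfl | rfl
          · exact absurd rfl hab
          · exact hcap1 _ 0 m h0r hmr
        · rcases (by tauto : b = 0 ∨ b = m) with rfl | rfl
          · exact hcap2 _ m 0 hmr h0r
          · exact absurd rfl hab
  exact ⟨F, ⟨⟨range n, hRn⟩, hUC, habscard,
    ⟨range k, hWL, card_range k⟩, fun A hA => ((hFmem A).mp hA).2.1,
    by rw [hsup, card_range]⟩, hTF⟩
end

section
/- For all integers k ≥ 0 and n with n ≥ max { 3, 5k − 4 }, there exists a (2,k,n)-construction, i.e. a finite union-closed family of finite sets with exactly 2 abundant elements, whose smallest set has size k and whose largest set has size n. -/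
set_option maxRecDepth 100000
set_option maxHeartbeats 1000000


/-! ### Generic blow-up machinery -/

/-- Blow up a set of block indices to the union of the corresponding blocks. -/
def blow {m : ℕ} (blk : Fin m → Finset ℕ) (A : Finset (Fin m)) : Finset ℕ :=
  A.biUnion blk

section Blow

variable {m : ℕ} (blk : Fin m → Finset ℕ)

lemma blow_union (A B : Finset (Fin m)) :
    blow blk (A ∪ B) = blow blk A ∪ blow blk B := by
  ext x; simp [blow, Finset.mem_biUnion, or_and_right, exists_or]

lemma mem_blow {A : Finset (Fin m)} {x : ℕ} :
    x ∈ blow blk A ↔ ∃ i ∈ A, x ∈ blk i := Finset.mem_biUnion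

lemma mem_blow_iff (hdisj : ∀ i j : Fin m, i ≠ j → Disjoint (blk i) (blk j)) {i : Fin m} {x : ℕ} (hx : x ∈ blk i) (A : Finset (Fin m)) :
    x ∈ blow blk A ↔ i ∈ A := by
  constructor
  · rintro h
    obtain ⟨j, hj, hxj⟩ := (mem_blow blk).1 h
    by_cases hij : i = j
    · exact hij ▸ hj
    · exact absurd hx (fun hx => (Finset.disjoint_left.1 (hdisj i j hij)) hx hxj)
  · intro h; exact (mem_blow blk).2 ⟨i, h, hx⟩

lemma blow_injective (hdisj : ∀ i j : Fin m, i ≠ j → Disjoint (blk i) (blk j))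
    (hnem : ∀ i : Fin m, (blk i).Nonempty) : Function.Injective (blow blk) := by
  intro A B h
  ext i
  obtain ⟨x, hx⟩ := hnem i
  rw [← mem_blow_iff blk hdisj hx A, ← mem_blow_iff blk hdisj hx B, h]

lemma blow_count (hdisj : ∀ i j : Fin m, i ≠ j → Disjoint (blk i) (blk j))
    (hnem : ∀ i : Fin m, (blk i).Nonempty) (F0 : Finset (Finset (Fin m))) {i : Fin m} {x : ℕ} (hx : x ∈ blk i) :
    ((F0.image (blow blk)).filter (fun A => x ∈ A)).card
      = (F0.filter (fun A => i ∈ A)).card := by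
  rw [Finset.filter_image]
  rw [Finset.card_image_of_injective _ (blow_injective blk hdisj hnem)]
  congr 1
  apply Finset.filter_congr
  intro A _
  simp only [mem_blow_iff blk hdisj hx A]

lemma blow_sup (F0 : Finset (Finset (Fin m))) :
    (F0.image (blow blk)).sup id = blow blk (F0.sup id) := by
  rw [Finset.sup_image]
  ext x
  simp only [Finset.mem_sup, mem_blow, Function.comp, id_eq]
  constructor
  · rintro ⟨A, hA, i, hiA, hx⟩
    exact ⟨i, ⟨A, hA, hiA⟩, hx⟩
  · rintro ⟨i, ⟨A, hA, hiA⟩, hx⟩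
    exact ⟨A, hA, i, hiA, hx⟩

lemma blow_card (hdisj : ∀ i j : Fin m, i ≠ j → Disjoint (blk i) (blk j)) (A : Finset (Fin m)) :
    (blow blk A).card = ∑ i ∈ A, (blk i).card :=
  Finset.card_biUnion (fun i _ j _ hij => hdisj i j hij)

/-- Assembly lemma: from a concrete family `F0` of block index sets and suitable
disjoint nonempty blocks, we obtain an `(f,k,n)`-construction. -/
lemma isConstruction_blow (hdisj : ∀ i j : Fin m, i ≠ j → Disjoint (blk i) (blk j))
    (hnem : ∀ i : Fin m, (blk i).Nonempty) (F0 : Finset (Finset (Fin m))) (I2 : Finset (Fin m))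
    (f k n : ℕ)
    (hF0ne : F0.Nonempty)
    (hUC : ∀ A ∈ F0, ∀ B ∈ F0, A ∪ B ∈ F0)
    (habund : ∀ i : Fin m,
      (2 * (F0.filter (fun A => i ∈ A)).card > F0.card) ↔ i ∈ I2)
    (hI2sub : I2 ⊆ F0.sup id)
    (hI2card : (I2.biUnion blk).card = f)
    (hmin : ∀ A ∈ F0, k ≤ ∑ i ∈ A, (blk i).card)
    (hwit : ∃ A ∈ F0, ∑ i ∈ A, (blk i).card = k)
    (htot : ∑ i ∈ F0.sup id, (blk i).card = n) :
    IsConstruction (F0.image (blow blk)) f k n := by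
  have hcardF : (F0.image (blow blk)).card = F0.card :=
    Finset.card_image_of_injective _ (blow_injective blk hdisj hnem)
  have habF : ∀ x : ℕ, ∀ i : Fin m, x ∈ blk i →
      (Abundant (F0.image (blow blk)) x ↔ i ∈ I2) := by
    intro x i hx
    unfold Abundant
    rw [blow_count blk hdisj hnem F0 hx, hcardF]
    exact habund i
  refine ⟨hF0ne.image _, ?_, ?_, ?_, ?_, ?_⟩
  · intro A hA B hB
    obtain ⟨A0, hA0, rfl⟩ := Finset.mem_image.1 hA
    obtain ⟨B0, hB0, rfl⟩ := Finset.mem_image.1 hB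
    rw [← blow_union]
    exact Finset.mem_image_of_mem _ (hUC A0 hA0 B0 hB0)
  · have hfilt : ((F0.image (blow blk)).sup id).filter (Abundant (F0.image (blow blk)))
        = I2.biUnion blk := by
      ext x
      simp only [Finset.mem_filter, Finset.mem_biUnion]
      constructor
      · rintro ⟨hxg, hab⟩
        rw [blow_sup blk, mem_blow] at hxg
        obtain ⟨i, hi, hx⟩ := hxg
        exact ⟨i, (habF x i hx).1 hab, hx⟩
      · rintro ⟨i, hi, hx⟩
        refine ⟨?_, (habF x i hx).2 hi⟩
        rw [blow_sup blk, mem_blow]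
        exact ⟨i, hI2sub hi, hx⟩
    rw [hfilt, hI2card]
  · obtain ⟨A, hA, hcard⟩ := hwit
    exact ⟨blow blk A, Finset.mem_image_of_mem _ hA,
      by rw [blow_card blk hdisj, hcard]⟩
  · intro A hA
    obtain ⟨A0, hA0, rfl⟩ := Finset.mem_image.1 hA
    rw [blow_card blk hdisj]
    exact hmin A0 hA0
  · rw [blow_sup blk, blow_card blk hdisj]
    exact htot

end Blow

/-! ### Concrete block families -/

/-- Defining predicate of the family used for `k ≥ 3`, over seven blocks:
`0 = a`, `1 = b`, `2 = X` (a block of size `k-2`), `3,4` the `a`-side blocks and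
`5,6` the `b`-side blocks (each of size `≥ k-1`). -/
def P7 (A : Finset (Fin 7)) : Prop :=
  (0 ∈ A ∧ 1 ∈ A ∧ 2 ∈ A) ∨
  (0 ∈ A ∧ 1 ∈ A ∧ 2 ∉ A ∧ (3 ∈ A ∨ 4 ∈ A ∨ 5 ∈ A ∨ 6 ∈ A)) ∨
  (0 ∈ A ∧ 1 ∉ A ∧ 2 ∉ A ∧ (3 ∈ A ∨ 4 ∈ A) ∧ 5 ∉ A ∧ 6 ∉ A) ∨
  (0 ∉ A ∧ 1 ∈ A ∧ 2 ∉ A ∧ (5 ∈ A ∨ 6 ∈ A) ∧ 3 ∉ A ∧ 4 ∉ A)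

instance : DecidablePred P7 := fun A => by unfold P7; infer_instance

/-- The family of block index sets used for `k ≥ 3`. It has 37 members. -/
def F7 : Finset (Finset (Fin 7)) := Finset.univ.filter P7

lemma mem_F7 {A : Finset (Fin 7)} : A ∈ F7 ↔ P7 A := by
  simp [F7, Finset.mem_filter]

lemma F7_unionClosed : ∀ A ∈ F7, ∀ B ∈ F7, A ∪ B ∈ F7 := by
  have key : ∀ A : Finset (Fin 7), P7 A → ∀ B : Finset (Fin 7), P7 B → P7 (A ∪ B) := by
    decide
  intro A hA B hB
  exact mem_F7.2 (key A (mem_F7.1 hA) B (mem_F7.1 hB))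

lemma F7_abund : ∀ i : Fin 7,
    (2 * (F7.filter (fun A => i ∈ A)).card > F7.card) ↔
      i ∈ ({0, 1} : Finset (Fin 7)) := by decide

lemma F7_sup : F7.sup id = Finset.univ := by decide

lemma F7_cover : ∀ A ∈ F7,
    ({0,1,2} : Finset (Fin 7)) ⊆ A ∨ ({0,3} : Finset (Fin 7)) ⊆ A ∨
    ({0,4} : Finset (Fin 7)) ⊆ A ∨ ({1,5} : Finset (Fin 7)) ⊆ A ∨
    ({1,6} : Finset (Fin 7)) ⊆ A := by
  have key : ∀ A : Finset (Fin 7), P7 A →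
      ({0,1,2} : Finset (Fin 7)) ⊆ A ∨ ({0,3} : Finset (Fin 7)) ⊆ A ∨
      ({0,4} : Finset (Fin 7)) ⊆ A ∨ ({1,5} : Finset (Fin 7)) ⊆ A ∨
      ({1,6} : Finset (Fin 7)) ⊆ A := by decide
  intro A hA
  exact key A (mem_F7.1 hA)

/-- Block boundaries for the `k ≥ 3` construction (`k = j + 3`, `n = 5j + 11 + e`). -/
def bnd (j e : ℕ) : ℕ → ℕ
  | 0 => 0
  | 1 => 1
  | 2 => 2
  | 3 => j + 3
  | 4 => 2 * j + 5 + e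
  | 5 => 3 * j + 7 + e
  | 6 => 4 * j + 9 + e
  | _ => 5 * j + 11 + e

/-- The family of block index sets used for `k ≤ 2`. -/
def F3 (k : ℕ) : Finset (Finset (Fin 3)) :=
  if k = 0 then {∅, {0,1}, {0,1,2}}
  else if k = 1 then {{0}, {0,1}, {0,1,2}}
  else {{0,1}, {0,1,2}}

theorem exists_2kn_construction (k n : ℕ) (hn : n ≥ max 3 (5 * k - 4)) :
    ∃ F : Finset (Finset ℕ), IsConstruction F 2 k n := by
  have hn3 : 3 ≤ n := le_trans (le_max_left _ _) hn
  by_cases hk : k ≤ 2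
  · -- small k: three blocks {0}, {1}, Ico 2 n
    set blk : Fin 3 → Finset ℕ := ![{0}, {1}, Finset.Ico 2 n] with hblk
    have hb0 : blk 0 = {0} := rfl
    have hb1 : blk 1 = {1} := rfl
    have hb2 : blk 2 = Finset.Ico 2 n := rfl
    have hnem : ∀ i : Fin 3, (blk i).Nonempty := by
      intro i
      fin_cases i
      · exact ⟨0, by simp [hb0]⟩
      · exact ⟨1, by simp [hb1]⟩
      · exact ⟨2, by simp [hb2, Finset.mem_Ico]; omega⟩
    have hdisj : ∀ i j : Fin 3, i ≠ j → Disjoint (blk i) (blk j) := by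
      intro i j hij
      fin_cases i <;> fin_cases j <;>
        simp_all [hb0, hb1, hb2, Finset.disjoint_left, Finset.mem_Ico] <;> omega
    have hc0 : (blk 0).card = 1 := by simp [hb0]
    have hc1 : (blk 1).card = 1 := by simp [hb1]
    have hc2 : (blk 2).card = n - 2 := by simp [hb2]
    have h2 : (({0,1} : Finset (Fin 3)).biUnion blk).card = 2 := by
      have hbi : (({0,1} : Finset (Fin 3)).biUnion blk) = {0, 1} := by
        ext x
        simp only [Finset.mem_biUnion, Finset.mem_insert, Finset.mem_singleton]
        constructor
        · rintro ⟨i, hi, hx⟩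
          fin_cases i <;> simp_all [hb0, hb1, hb2]
        · rintro (rfl | rfl)
          exacts [⟨0, by simp [hb0]⟩, ⟨1, by simp [hb1]⟩]
      rw [hbi]
      decide
    have hsum3 : ∀ q : ℕ, q ≤ 2 → (∀ A ∈ F3 q, q ≤ ∑ i ∈ A, (blk i).card) := by
      intro q hq A hA
      interval_cases q
      · exact Nat.zero_le _
      · have h0 : (0 : Fin 3) ∈ A := by
          have : ∀ B ∈ F3 1, (0 : Fin 3) ∈ B := by decide
          exact this A hA
        calc 1 = ∑ i ∈ ({0} : Finset (Fin 3)), (blk i).card := by simp [hc0]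
        _ ≤ ∑ i ∈ A, (blk i).card :=
          Finset.sum_le_sum_of_subset (by simpa using h0)
      · have h01 : ({0,1} : Finset (Fin 3)) ⊆ A := by
          have : ∀ B ∈ F3 2, ({0,1} : Finset (Fin 3)) ⊆ B := by decide
          exact this A hA
        calc 2 = ∑ i ∈ ({0,1} : Finset (Fin 3)), (blk i).card := by
              rw [Finset.sum_pair (by decide), hc0, hc1]
        _ ≤ ∑ i ∈ A, (blk i).card := Finset.sum_le_sum_of_subset h01
    have htot3 : ∀ q : ℕ, (F3 q).sup id = Finset.univ →
        ∑ i ∈ (F3 q).sup id, (blk i).card = n := by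
      intro q hsup
      rw [hsup, Fin.sum_univ_three, hc0, hc1, hc2]
      omega
    refine ⟨(F3 k).image (blow blk), ?_⟩
    interval_cases k
    · exact isConstruction_blow blk hdisj hnem (F3 0) {0,1} 2 0 n
        ⟨∅, by decide⟩ (by decide) (by decide) (by decide) h2
        (hsum3 0 (by norm_num)) ⟨∅, by decide, by simp⟩ (htot3 0 (by decide))
    · exact isConstruction_blow blk hdisj hnem (F3 1) {0,1} 2 1 n
        ⟨{0}, by decide⟩ (by decide) (by decide) (by decide) h2
        (hsum3 1 (by norm_num)) ⟨{0}, by decide, by simp [hc0]⟩ (htot3 1 (by decide))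
    · exact isConstruction_blow blk hdisj hnem (F3 2) {0,1} 2 2 n
        ⟨{0,1}, by decide⟩ (by decide) (by decide) (by decide) h2
        (hsum3 2 (by norm_num))
        ⟨{0,1}, by decide, by rw [Finset.sum_pair (by decide), hc0, hc1]⟩
        (htot3 2 (by decide))
  · -- k ≥ 3
    push_neg at hk
    obtain ⟨j, rfl⟩ : ∃ j, k = j + 3 := ⟨k - 3, by omega⟩
    have hn' : 5 * (j + 3) - 4 ≤ n := le_trans (le_max_right _ _) hn
    obtain ⟨e, rfl⟩ : ∃ e, n = 5 * j + 11 + e := ⟨n - (5 * j + 11), by omega⟩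
    set blk : Fin 7 → Finset ℕ :=
      fun i => Finset.Ico (bnd j e i.val) (bnd j e (i.val + 1)) with hblk
    have e0 : bnd j e 0 = 0 := rfl
    have e1 : bnd j e 1 = 1 := rfl
    have e2 : bnd j e 2 = 2 := rfl
    have e3 : bnd j e 3 = j + 3 := rfl
    have e4 : bnd j e 4 = 2 * j + 5 + e := rfl
    have e5 : bnd j e 5 = 3 * j + 7 + e := rfl
    have e6 : bnd j e 6 = 4 * j + 9 + e := rfl
    have e7 : bnd j e 7 = 5 * j + 11 + e := rfl
    have hmono : ∀ q : ℕ, q ≤ 7 → ∀ p : ℕ, p < q → bnd j e p < bnd j e q := by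
      intro q
      induction q with
      | zero => omega
      | succ q ih =>
        intro hq p hp
        have hq6 : q ≤ 6 := by omega
        have hstep : bnd j e q < bnd j e (q + 1) := by
          interval_cases q <;> norm_num <;> omega
        rcases Nat.lt_or_ge p q with h | h
        · exact lt_trans (ih (by omega) p h) hstep
        · have hpq : p = q := by omega
          subst hpq; exact hstep
    have hmono' : ∀ p q : ℕ, p ≤ q → q ≤ 7 → bnd j e p ≤ bnd j e q := by
      intro p q h1 h2
      rcases Nat.lt_or_ge p q with h | h
      · exact le_of_lt (hmono q h2 p h)
      · have hpq : p = q := le_antisymm h1 h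
        subst hpq
        exact le_rfl
    have hb0 : blk 0 = {0} := by
      have h : blk 0 = Finset.Ico 0 1 := rfl
      rw [h]
      ext x
      simp [Finset.mem_Ico]
    have hb1 : blk 1 = {1} := by
      have h : blk 1 = Finset.Ico 1 2 := rfl
      rw [h]
      ext x
      simp [Finset.mem_Ico]
    have hc0 : (blk 0).card = 1 := by rw [hb0]; simp
    have hc1 : (blk 1).card = 1 := by rw [hb1]; simp
    have hc2 : (blk 2).card = j + 1 := by
      have h : blk 2 = Finset.Ico 2 (j + 3) := rfl
      rw [h, Nat.card_Ico]; omega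
    have hc3 : (blk 3).card = j + 2 + e := by
      have h : blk 3 = Finset.Ico (j + 3) (2 * j + 5 + e) := rfl
      rw [h, Nat.card_Ico]; omega
    have hc4 : (blk 4).card = j + 2 := by
      have h : blk 4 = Finset.Ico (2 * j + 5 + e) (3 * j + 7 + e) := rfl
      rw [h, Nat.card_Ico]; omega
    have hc5 : (blk 5).card = j + 2 := by
      have h : blk 5 = Finset.Ico (3 * j + 7 + e) (4 * j + 9 + e) := rfl
      rw [h, Nat.card_Ico]; omega
    have hc6 : (blk 6).card = j + 2 := by
      have h : blk 6 = Finset.Ico (4 * j + 9 + e) (5 * j + 11 + e) := rfl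
      rw [h, Nat.card_Ico]; omega
    have hnem : ∀ i : Fin 7, (blk i).Nonempty := by
      intro i
      have hi := i.isLt
      rw [hblk]
      exact Finset.nonempty_Ico.2 (hmono _ (by omega) _ (by omega))
    have hdisj : ∀ i i' : Fin 7, i ≠ i' → Disjoint (blk i) (blk i') := by
      have key : ∀ i i' : Fin 7, i.val < i'.val → Disjoint (blk i) (blk i') := by
        intro i i' h
        have hi' := i'.isLt
        rw [hblk, Finset.disjoint_left]
        intro x hx hx'
        rw [Finset.mem_Ico] at hx hx'
        have : bnd j e (i.val + 1) ≤ bnd j e i'.val := hmono' _ _ (by omega) (by omega)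
        omega
      intro i i' hii'
      rcases Nat.lt_or_ge i.val i'.val with h | h
      · exact key _ _ h
      · rcases Nat.lt_or_ge i'.val i.val with h' | h'
        · exact (key _ _ h').symm
        · exact absurd (Fin.ext (le_antisymm h' h)) hii'
    have h2 : (({0,1} : Finset (Fin 7)).biUnion blk).card = 2 := by
      have hbi : (({0,1} : Finset (Fin 7)).biUnion blk) = {0, 1} := by
        ext x
        simp only [Finset.mem_biUnion, Finset.mem_insert, Finset.mem_singleton]
        constructor
        · rintro ⟨i, rfl | rfl, hx⟩
          · left; simpa [hb0] using hx
          · right; simpa [hb1] using hx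
        · rintro (rfl | rfl)
          exacts [⟨0, by simp [hb0]⟩, ⟨1, by simp [hb1]⟩]
      rw [hbi]
      decide
    refine ⟨F7.image (blow blk),
      isConstruction_blow blk hdisj hnem F7 {0,1} 2 (j + 3) (5 * j + 11 + e)
        ⟨{0,1,2}, by decide⟩ F7_unionClosed F7_abund
        (by rw [F7_sup]; intro x _; exact Finset.mem_univ x) h2 ?_ ?_ ?_⟩
    · -- min cardinality
      intro A hA
      have hsum012 : ∑ i ∈ ({0,1,2} : Finset (Fin 7)), (blk i).card = j + 3 := by
        rw [show ({0,1,2} : Finset (Fin 7)) = insert 0 (insert 1 {2}) from rfl,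
          Finset.sum_insert (by decide), Finset.sum_insert (by decide),
          Finset.sum_singleton, hc0, hc1, hc2]
        omega
      rcases F7_cover A hA with h | h | h | h | h
      · calc j + 3 = ∑ i ∈ ({0,1,2} : Finset (Fin 7)), (blk i).card := hsum012.symm
        _ ≤ ∑ i ∈ A, (blk i).card := Finset.sum_le_sum_of_subset h
      · calc j + 3 ≤ ∑ i ∈ ({0,3} : Finset (Fin 7)), (blk i).card := by
              rw [Finset.sum_pair (by decide), hc0, hc3]; omega
        _ ≤ ∑ i ∈ A, (blk i).card := Finset.sum_le_sum_of_subset h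
      · calc j + 3 ≤ ∑ i ∈ ({0,4} : Finset (Fin 7)), (blk i).card := by
              rw [Finset.sum_pair (by decide), hc0, hc4]; omega
        _ ≤ ∑ i ∈ A, (blk i).card := Finset.sum_le_sum_of_subset h
      · calc j + 3 ≤ ∑ i ∈ ({1,5} : Finset (Fin 7)), (blk i).card := by
              rw [Finset.sum_pair (by decide), hc1, hc5]; omega
        _ ≤ ∑ i ∈ A, (blk i).card := Finset.sum_le_sum_of_subset h
      · calc j + 3 ≤ ∑ i ∈ ({1,6} : Finset (Fin 7)), (blk i).card := by
              rw [Finset.sum_pair (by decide), hc1, hc6]; omega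
        _ ≤ ∑ i ∈ A, (blk i).card := Finset.sum_le_sum_of_subset h
    · -- witness of cardinality k
      refine ⟨{0,1,2}, by decide, ?_⟩
      rw [show ({0,1,2} : Finset (Fin 7)) = insert 0 (insert 1 {2}) from rfl,
        Finset.sum_insert (by decide), Finset.sum_insert (by decide),
        Finset.sum_singleton, hc0, hc1, hc2]
      omega
    · -- total cardinality
      rw [F7_sup, Fin.sum_univ_seven, hc0, hc1, hc2, hc3, hc4, hc5, hc6]
      omega
end

section
/- If Conjecture P4 holds (for every finite nonempty twin-free union-closed family 𝓕 of finite sets with ∅ ∉ 𝓕 having exactly one abundant element x, 𝓕 consists of precisely all subsets of the largest set M of 𝓕 that contain x), then Conjecture P3 holds (for every finite nonempty union-closed family 𝓕 of finite sets with ∅ ∉ 𝓕 having exactly one abundant element x, x belongs to every set of 𝓕). -/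
lemma twin_mem_iff {a b : ℕ} (hab : a ≠ b)
    {A : Finset ℕ} (h : ¬ (A ∩ {a, b}).card = 1) : a ∈ A ↔ b ∈ A := by
  constructor <;> intro h1 <;> by_contra h2
  · apply h
    have : A ∩ {a, b} = {a} := by
      ext y
      simp only [Finset.mem_inter, Finset.mem_insert, Finset.mem_singleton]
      constructor
      · rintro ⟨hy, rfl | rfl⟩ <;> [rfl; exact absurd hy h2]
      · rintro rfl; exact ⟨h1, Or.inl rfl⟩
    simp [this]
  · apply h
    have : A ∩ {a, b} = {b} := by
      ext y
      simp only [Finset.mem_inter, Finset.mem_insert, Finset.mem_singleton]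
      constructor
      · rintro ⟨hy, rfl | rfl⟩ <;> [exact absurd hy h2; rfl]
      · rintro rfl; exact ⟨h1, Or.inr rfl⟩
    simp [this]

lemma poonen_aux
    (P4 : ∀ F : Finset (Finset ℕ), F.Nonempty → UnionClosed F → (∅ : Finset ℕ) ∉ F →
      TwinFree F → ∀ x : ℕ, Abundant F x → (∀ y : ℕ, Abundant F y → y = x) →
      F = (F.sup id).powerset.filter (fun A => x ∈ A)) :
    ∀ n : ℕ, ∀ F : Finset (Finset ℕ), (F.sup id).card ≤ n →
      F.Nonempty → UnionClosed F → (∅ : Finset ℕ) ∉ F →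
      ∀ x : ℕ, Abundant F x → (∀ y : ℕ, Abundant F y → y = x) →
      ∀ A ∈ F, x ∈ A := by
  intro n
  induction n with
  | zero =>
    intro F hn hne hUC hempty x hx hux A hA
    exfalso
    have hsub : A ⊆ F.sup id := Finset.le_sup (f := id) hA
    have hs0 : F.sup id = ∅ := Finset.card_eq_zero.mp (Nat.le_zero.mp hn)
    apply hempty
    have hA0 : A = ∅ := Finset.subset_empty.mp (hs0 ▸ hsub)
    rwa [← hA0]
  | succ n ih =>
    intro F hn hne hUC hempty x hx hux
    by_cases htf : TwinFree F
    · have hF := P4 F hne hUC hempty htf x hx hux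
      intro A hA
      rw [hF] at hA
      exact (Finset.mem_filter.mp hA).2
    · unfold TwinFree at htf
      push_neg at htf
      obtain ⟨a, ha, b, hb, hab, htw⟩ := htf
      have key : ∀ c d : ℕ, c ∈ F.sup id → d ∈ F.sup id → c ≠ d → d ≠ x →
          (∀ A ∈ F, ¬ (A ∩ {c, d}).card = 1) → ∀ A ∈ F, x ∈ A := by
        intro c d hc hd hcd hdx htwcd A hA
        set F' := F.image (fun A => A.erase d) with hF'
        have hmemiff : ∀ A ∈ F, (c ∈ A ↔ d ∈ A) := fun A hA => twin_mem_iff hcd (htwcd A hA)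
        have hinj : Set.InjOn (fun A : Finset ℕ => A.erase d) F := by
          intro C hC D hD hCD
          have hC' := hmemiff C hC
          have hD' := hmemiff D hD
          simp only at hCD
          ext y
          by_cases hy : y = d
          · rw [hy, ← hC', ← hD']
            have h2 : c ∈ C.erase d ↔ c ∈ D.erase d := by rw [hCD]
            simpa [Finset.mem_erase, hcd] using h2
          · have h2 : y ∈ C.erase d ↔ y ∈ D.erase d := by rw [hCD]
            simpa [Finset.mem_erase, hy] using h2
        have hsup' : F'.sup id = (F.sup id).erase d := by
          ext y
          simp only [hF', Finset.mem_sup, Finset.mem_image, Finset.mem_erase, id]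
          constructor
          · rintro ⟨C, ⟨D, hD, rfl⟩, hy⟩
            exact ⟨(Finset.mem_erase.mp hy).1, D, hD, (Finset.mem_erase.mp hy).2⟩
          · rintro ⟨hyd, D, hD, hyD⟩
            exact ⟨D.erase d, ⟨D, hD, rfl⟩, Finset.mem_erase.mpr ⟨hyd, hyD⟩⟩
        have hcard' : (F'.sup id).card ≤ n := by
          rw [hsup', Finset.card_erase_of_mem hd]
          omega
        have hne' : F'.Nonempty := hne.image _
        have hUC' : UnionClosed F' := by
          intro C hC D hD
          obtain ⟨C0, hC0, rfl⟩ := Finset.mem_image.mp hC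
          obtain ⟨D0, hD0, rfl⟩ := Finset.mem_image.mp hD
          rw [← Finset.erase_union_distrib]
          exact Finset.mem_image_of_mem _ (hUC C0 hC0 D0 hD0)
        have hempty' : (∅ : Finset ℕ) ∉ F' := by
          intro hmem
          obtain ⟨D, hD, hDe⟩ := Finset.mem_image.mp hmem
          have hDd : D ⊆ {d} := by
            intro y hy
            by_contra hyd
            have h2 : y ∈ D.erase d := Finset.mem_erase.mpr ⟨by simpa using hyd, hy⟩
            rw [hDe] at h2
            exact absurd h2 (Finset.notMem_empty y)
          rcases Finset.subset_singleton_iff.mp hDd with h0 | h1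
          · exact hempty (h0 ▸ hD)
          · have h2 : d ∈ D := by rw [h1]; exact Finset.mem_singleton_self d
            have h3 : c ∈ D := (hmemiff D hD).mpr h2
            rw [h1] at h3
            exact hcd (Finset.mem_singleton.mp h3)
        have hfilter : ∀ y : ℕ, y ≠ d →
            (F'.filter (fun A => y ∈ A)).card = (F.filter (fun A => y ∈ A)).card := by
          intro y hy
          have heq : F'.filter (fun A => y ∈ A) =
              (F.filter (fun A => y ∈ A)).image (fun A => A.erase d) := by
            ext C
            simp only [hF', Finset.mem_filter, Finset.mem_image]
            constructor
            · rintro ⟨⟨D, hD, rfl⟩, hyC⟩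
              exact ⟨D, ⟨hD, (Finset.mem_erase.mp hyC).2⟩, rfl⟩
            · rintro ⟨D, ⟨hD, hyD⟩, rfl⟩
              exact ⟨⟨D, hD, rfl⟩, Finset.mem_erase.mpr ⟨hy, hyD⟩⟩
          rw [heq, Finset.card_image_of_injOn
            (hinj.mono (fun C hC => (Finset.mem_filter.mp hC).1))]
        have hFcard : F'.card = F.card := Finset.card_image_of_injOn hinj
        have habx : Abundant F' x := by
          unfold Abundant
          rw [hfilter x (Ne.symm hdx), hFcard]
          exact hx
        have huniq' : ∀ y : ℕ, Abundant F' y → y = x := by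
          intro y hy
          by_cases hyd : y = d
          · exfalso
            subst hyd
            have hfe : F'.filter (fun A => y ∈ A) = ∅ := by
              apply Finset.filter_eq_empty_iff.mpr
              intro C hC
              obtain ⟨D, hD, rfl⟩ := Finset.mem_image.mp hC
              simp
            unfold Abundant at hy
            rw [hfe] at hy
            simp at hy
          · apply hux
            unfold Abundant at hy ⊢
            rwa [hfilter y hyd, hFcard] at hy
        have hx' := ih F' hcard' hne' hUC' hempty' x habx huniq' (A.erase d)
          (Finset.mem_image_of_mem _ hA)
        exact Finset.mem_of_mem_erase hx'
      by_cases hbx : b = x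
      · have hax : a ≠ x := fun h => hab (h.trans hbx.symm)
        refine key b a hb ha hab.symm hax ?_
        intro A hA
        rw [Finset.pair_comm]
        exact htw A hA
      · exact key a b ha hb hab hbx htw

theorem poonen4_implies_poonen3
    (P4 : ∀ F : Finset (Finset ℕ), F.Nonempty → UnionClosed F → (∅ : Finset ℕ) ∉ F →
      TwinFree F → ∀ x : ℕ, Abundant F x → (∀ y : ℕ, Abundant F y → y = x) →
      F = (F.sup id).powerset.filter (fun A => x ∈ A)) :
    ∀ F : Finset (Finset ℕ), F.Nonempty → UnionClosed F → (∅ : Finset ℕ) ∉ F →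
      ∀ x : ℕ, Abundant F x → (∀ y : ℕ, Abundant F y → y = x) →
      ∀ A ∈ F, x ∈ A :=
  fun F hne hUC hempty x hx hux =>
    poonen_aux P4 (F.sup id).card F le_rfl hne hUC hempty x hx hux
end

section
/- If Conjecture P3 holds (for every finite nonempty union-closed family 𝓕 of finite sets with ∅ ∉ 𝓕 having exactly one abundant element x, x belongs to every set of 𝓕), then Conjecture CH2 holds (every finite nonempty union-closed family of finite sets whose smallest set has size at least 2 has at least two abundant elements). -/
lemma exists_abundant_of_P3
    (P3 : ∀ F : Finset (Finset ℕ), F.Nonempty → UnionClosed F → (∅ : Finset ℕ) ∉ F →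
      ∀ x : ℕ, Abundant F x → (∀ y : ℕ, Abundant F y → y = x) → ∀ A ∈ F, x ∈ A)
    (F : Finset (Finset ℕ)) (hne : F.Nonempty) (huc : UnionClosed F)
    (hemp : (∅ : Finset ℕ) ∉ F) : ∃ x, Abundant F x := by
  by_contra h
  push_neg at h
  obtain ⟨z, hz⟩ := Infinite.exists_notMem_finset (F.sup id)
  have hzA : ∀ A ∈ F, z ∉ A := by
    intro A hA hzA
    exact hz (Finset.le_sup (f := id) hA hzA)
  set G : Finset (Finset ℕ) := (F ∪ F.image (insert z)) ∪ {{z}} with hG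
  have hmemG : ∀ B, B ∈ G ↔ B ∈ F ∨ (∃ A ∈ F, insert z A = B) ∨ B = {z} := by
    intro B
    simp [hG, Finset.mem_union, Finset.mem_image, or_assoc]; exact or_rotate
  have hGne : G.Nonempty := ⟨{z}, by rw [hmemG]; tauto⟩
  have hGuc : UnionClosed G := by
    intro A hA B hB
    rw [hmemG] at hA hB ⊢
    rcases hA with hA | ⟨A', hA', rfl⟩ | rfl <;>
      rcases hB with hB | ⟨B', hB', rfl⟩ | rfl
    · exact Or.inl (huc _ hA _ hB)
    · refine Or.inr (Or.inl ⟨A ∪ B', huc _ hA _ hB', ?_⟩)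
      simp [Finset.union_insert, Finset.insert_union]
    · refine Or.inr (Or.inl ⟨A, hA, ?_⟩)
      ext t; simp [or_comm]
    · refine Or.inr (Or.inl ⟨A' ∪ B, huc _ hA' _ hB, ?_⟩)
      simp [Finset.union_insert, Finset.insert_union]
    · refine Or.inr (Or.inl ⟨A' ∪ B', huc _ hA' _ hB', ?_⟩)
      ext t; simp [or_assoc, or_left_comm]
    · refine Or.inr (Or.inl ⟨A', hA', ?_⟩)
      ext t; simp [or_comm]
    · refine Or.inr (Or.inl ⟨B, hB, ?_⟩)
      ext t; simp
    · refine Or.inr (Or.inl ⟨B', hB', ?_⟩)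
      ext t; simp
    · exact Or.inr (Or.inr (by simp))
  have hGemp : (∅ : Finset ℕ) ∉ G := by
    rw [hmemG]
    push_neg
    refine ⟨hemp, ?_, (Finset.singleton_ne_empty z).symm⟩
    rintro A hA
    exact Finset.insert_nonempty z A
  have hzF : {z} ∉ F := fun h => hzA _ h (Finset.mem_singleton_self z)
  have hdisj1 : ∀ B ∈ F.image (insert z), B ∉ F := by
    rintro B hB
    simp only [Finset.mem_image] at hB
    obtain ⟨A, hA, rfl⟩ := hB
    exact fun h => hzA _ h (Finset.mem_insert_self z A)
  have hinj : Set.InjOn (insert z) (F : Set (Finset ℕ)) := by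
    intro A hA B hB hAB
    have : (insert z A).erase z = (insert z B).erase z := by rw [hAB]
    rwa [Finset.erase_insert (hzA _ hA), Finset.erase_insert (hzA _ hB)] at this
  have hcardim : (F.image (insert z)).card = F.card := Finset.card_image_of_injOn hinj
  have hzim : {z} ∉ F ∪ F.image (insert z) := by
    simp only [Finset.mem_union, Finset.mem_image]
    push_neg
    refine ⟨hzF, ?_⟩
    rintro A hA hins
    have hsub : A ⊆ {z} := hins ▸ Finset.subset_insert z A
    rcases Finset.subset_singleton_iff.mp hsub with rfl | rfl
    · exact hemp hA
    · exact hzA _ hA (Finset.mem_singleton_self z)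
  have hcardG : G.card = 2 * F.card + 1 := by
    rw [hG, Finset.card_union_of_disjoint, Finset.card_union_of_disjoint]
    · simp [hcardim]; ring
    · rw [Finset.disjoint_right]
      intro B hB
      exact hdisj1 B hB
    · rw [Finset.disjoint_right]
      simpa using hzim
  -- count of z in G
  have hfz : G.filter (fun A => z ∈ A) = F.image (insert z) ∪ {{z}} := by
    ext B
    simp only [Finset.mem_filter, hmemG B, Finset.mem_union, Finset.mem_image,
      Finset.mem_singleton]
    constructor
    · rintro ⟨hB | ⟨A, hA, rfl⟩ | rfl, hzB⟩
      · exact absurd hzB (hzA _ hB)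
      · exact Or.inl ⟨A, hA, rfl⟩
      · exact Or.inr rfl
    · rintro (⟨A, hA, rfl⟩ | rfl)
      · exact ⟨Or.inr (Or.inl ⟨A, hA, rfl⟩), Finset.mem_insert_self z A⟩
      · exact ⟨Or.inr (Or.inr rfl), Finset.mem_singleton_self z⟩
  have hcz : (G.filter (fun A => z ∈ A)).card = F.card + 1 := by
    rw [hfz, Finset.card_union_of_disjoint]
    · simp [hcardim]
    · rw [Finset.disjoint_right]
      simp only [Finset.mem_singleton, forall_eq]
      intro h
      exact hzim (Finset.mem_union_right _ h)
  have habz : Abundant G z := by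
    rw [Abundant, hcz, hcardG]; omega
  have huniq : ∀ y, Abundant G y → y = z := by
    intro y hy
    by_contra hyz
    have hfy : G.filter (fun A => y ∈ A) =
        F.filter (fun A => y ∈ A) ∪ (F.filter (fun A => y ∈ A)).image (insert z) := by
      ext B
      simp only [Finset.mem_filter, hmemG B, Finset.mem_union, Finset.mem_image]
      constructor
      · rintro ⟨hB | ⟨A, hA, rfl⟩ | rfl, hyB⟩
        · exact Or.inl ⟨hB, hyB⟩
        · have : y ∈ A := by
            rcases Finset.mem_insert.mp hyB with h | h
            · exact absurd h hyz
            · exact h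
          exact Or.inr ⟨A, ⟨hA, this⟩, rfl⟩
        · exact absurd (Finset.mem_singleton.mp hyB) hyz
      · rintro (⟨hB, hyB⟩ | ⟨A, ⟨hA, hyA⟩, rfl⟩)
        · exact ⟨Or.inl hB, hyB⟩
        · exact ⟨Or.inr (Or.inl ⟨A, hA, rfl⟩), Finset.mem_insert_of_mem hyA⟩
    have hcy : (G.filter (fun A => y ∈ A)).card = 2 * (F.filter (fun A => y ∈ A)).card := by
      rw [hfy, Finset.card_union_of_disjoint]
      · rw [Finset.card_image_of_injOn (hinj.mono (fun A hA => Finset.mem_filter.mp hA |>.1))]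
        ring
      · rw [Finset.disjoint_right]
        rintro B hB
        simp only [Finset.mem_image] at hB
        obtain ⟨A, hA, rfl⟩ := hB
        intro h
        exact hzA _ (Finset.mem_filter.mp h).1 (Finset.mem_insert_self z A)
    have := hy
    rw [Abundant, hcy, hcardG] at this
    have : 2 * (F.filter (fun A => y ∈ A)).card > F.card := by omega
    exact h y this
  have := P3 G hGne hGuc hGemp z habz huniq
  obtain ⟨A, hA⟩ := hne
  exact hzA A hA (this A (by rw [hmemG]; tauto))

theorem poonen3_implies_cuihu2
    (P3 : ∀ F : Finset (Finset ℕ), F.Nonempty → UnionClosed F → (∅ : Finset ℕ) ∉ F →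
      ∀ x : ℕ, Abundant F x → (∀ y : ℕ, Abundant F y → y = x) → ∀ A ∈ F, x ∈ A) :
    ∀ F : Finset (Finset ℕ), F.Nonempty → UnionClosed F → (∀ A ∈ F, 2 ≤ A.card) →
      ∃ x y : ℕ, x ≠ y ∧ Abundant F x ∧ Abundant F y := by
  intro F hne huc hcard
  have hemp : (∅ : Finset ℕ) ∉ F := fun h => by simpa using hcard ∅ h
  obtain ⟨x, hx⟩ := exists_abundant_of_P3 P3 F hne huc hemp
  by_contra hcon
  push_neg at hcon
  have huniq : ∀ y, Abundant F y → y = x := by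
    intro y hy
    by_contra hyx
    exact hcon y x hyx hy hx
  have hxall : ∀ A ∈ F, x ∈ A := P3 F hne huc hemp x hx huniq
  set G := F.image (fun A => A.erase x) with hG
  have hinj : Set.InjOn (fun A => A.erase x) (F : Set (Finset ℕ)) := by
    intro A hA B hB hAB
    have h2 : insert x (A.erase x) = insert x (B.erase x) := by
      simp only at hAB; rw [hAB]
    rwa [Finset.insert_erase (hxall A hA), Finset.insert_erase (hxall B hB)] at h2
  have hGne : G.Nonempty := hne.image _
  have hGuc : UnionClosed G := by
    rintro A' hA' B' hB'
    simp only [hG, Finset.mem_image] at hA' hB' ⊢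
    obtain ⟨A, hA, rfl⟩ := hA'
    obtain ⟨B, hB, rfl⟩ := hB'
    exact ⟨A ∪ B, huc _ hA _ hB, Finset.erase_union_distrib A B x⟩
  have hGemp : (∅ : Finset ℕ) ∉ G := by
    simp only [hG, Finset.mem_image]
    rintro ⟨A, hA, hAe⟩
    have h1 : (A.erase x).card = A.card - 1 := Finset.card_erase_of_mem (hxall A hA)
    rw [hAe, Finset.card_empty] at h1
    have h2 := hcard A hA
    omega
  obtain ⟨y, hy⟩ := exists_abundant_of_P3 P3 G hGne hGuc hGemp
  have hyx : y ≠ x := by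
    rintro rfl
    have : G.filter (fun A => y ∈ A) = ∅ := by
      rw [Finset.filter_eq_empty_iff]
      simp only [hG, Finset.mem_image]
      rintro B ⟨A, hA, rfl⟩
      exact Finset.notMem_erase y A
    rw [Abundant, this] at hy
    simp at hy
  have hcardG : G.card = F.card := Finset.card_image_of_injOn hinj
  have hfilt : G.filter (fun A => y ∈ A) =
      (F.filter (fun A => y ∈ A)).image (fun A => A.erase x) := by
    ext B
    simp only [hG, Finset.mem_filter, Finset.mem_image]
    constructor
    · rintro ⟨⟨A, hA, rfl⟩, hyB⟩
      exact ⟨A, ⟨hA, (Finset.mem_erase.mp hyB).2⟩, rfl⟩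
    · rintro ⟨A, ⟨hA, hyA⟩, rfl⟩
      exact ⟨⟨A, hA, rfl⟩, Finset.mem_erase.mpr ⟨hyx, hyA⟩⟩
  have hcy : (G.filter (fun A => y ∈ A)).card = (F.filter (fun A => y ∈ A)).card := by
    rw [hfilt]
    exact Finset.card_image_of_injOn (hinj.mono (fun A hA => Finset.mem_filter.mp hA |>.1))
  have hyF : Abundant F y := by
    rw [Abundant] at hy ⊢
    rwa [hcy, hcardG] at hy
  exact hyx (huniq y hyF)
end

section
/- If Conjecture CH2 holds (every finite nonempty union-closed family of finite sets whose smallest set has size at least 2 has at least two abundant elements), then Frankl's conjecture holds (every finite nonempty union-closed family 𝓕 of finite sets with ∅ ∉ 𝓕 has an abundant element). -/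
theorem cuihu2_implies_frankl
    (CH2 : ∀ F : Finset (Finset ℕ), F.Nonempty → UnionClosed F → (∀ A ∈ F, 2 ≤ A.card) →
      ∃ x y : ℕ, x ≠ y ∧ Abundant F x ∧ Abundant F y) :
    ∀ F : Finset (Finset ℕ), F.Nonempty → UnionClosed F → (∅ : Finset ℕ) ∉ F →
      ∃ x : ℕ, Abundant F x := by
  intro F hne hUC hempty
  by_cases h2 : ∀ A ∈ F, 2 ≤ A.card
  · obtain ⟨x, y, _, hx, _⟩ := CH2 F hne hUC h2
    exact ⟨x, hx⟩
  · push_neg at h2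
    obtain ⟨A, hA, hAc⟩ := h2
    have hc : A.card = 1 := by
      have : A.card ≠ 0 := fun h => hempty (by rwa [Finset.card_eq_zero.mp h] at hA)
      omega
    obtain ⟨x, hx⟩ := Finset.card_eq_one.mp hc
    subst hx
    refine ⟨x, ?_⟩
    unfold Abundant
    set F1 := F.filter (fun B => x ∈ B) with hF1
    set F0 := F.filter (fun B => x ∉ B) with hF0
    have hsplit : F1.card + F0.card = F.card :=
      Finset.card_filter_add_card_filter_not _
    have hmem1 : {x} ∈ F1 := Finset.mem_filter.mpr ⟨hA, Finset.mem_singleton_self x⟩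
    have hle : F0.card ≤ (F1.erase {x}).card := by
      apply Finset.card_le_card_of_injOn (fun B => insert x B)
      · intro B hB
        rw [hF0, Finset.mem_coe, Finset.mem_filter] at hB
        refine Finset.mem_erase.mpr ⟨?_, Finset.mem_filter.mpr ⟨?_, Finset.mem_insert_self x B⟩⟩
        · intro heq
          have hBe : B = ∅ := by
            apply Finset.eq_empty_of_forall_notMem
            intro b hb
            have hmem : b ∈ insert x B := Finset.mem_insert_of_mem hb
            rw [show insert x B = {x} from heq, Finset.mem_singleton] at hmem
            exact hB.2 (hmem ▸ hb)
          exact hempty (hBe ▸ hB.1)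
        · have := hUC _ hA _ hB.1
          simpa using this
      · intro B hB C hC heq
        rw [hF0, Finset.coe_filter, Set.mem_setOf_eq] at hB hC
        have h := congrArg (fun S => Finset.erase S x) heq
        simpa [Finset.erase_insert hB.2, Finset.erase_insert hC.2] using h
    have hcard : (F1.erase {x}).card = F1.card - 1 := Finset.card_erase_of_mem hmem1
    have hpos : 1 ≤ F1.card := Finset.card_pos.mpr ⟨_, hmem1⟩
    omega
end

section
/- The following two statements are equivalent: (i) every finite nonempty union-closed family 𝓕 of finite sets whose smallest set has size at least 2 has at least two abundant elements; (ii) for every finite union-closed family 𝓕 of finite sets with 𝓕 nonempty, 𝓕 ≠ {∅}, and every non-empty set of 𝓕 of size at least 2, there are at least two elements x with 2·|{A ∈ 𝓕 : x ∈ A}| ≥ |𝓕| (i.e. each belongs to at least half of the sets of 𝓕). -/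
theorem cuihu2_equiv :
    (∀ F : Finset (Finset ℕ), F.Nonempty → UnionClosed F → (∀ A ∈ F, 2 ≤ A.card) →
      ∃ x y : ℕ, x ≠ y ∧ Abundant F x ∧ Abundant F y) ↔
    (∀ F : Finset (Finset ℕ), F.Nonempty → UnionClosed F → F ≠ {∅} →
      (∀ A ∈ F, A ≠ ∅ → 2 ≤ A.card) →
      ∃ x y : ℕ, x ≠ y ∧
        2 * (F.filter (fun A => x ∈ A)).card ≥ F.card ∧
        2 * (F.filter (fun A => y ∈ A)).card ≥ F.card) := by
  constructor
  · intro h F hne huc hns hcard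
    set F' := F.erase ∅ with hF'
    have hF'ne : F'.Nonempty := by
      by_contra hcon
      rw [Finset.not_nonempty_iff_eq_empty, Finset.erase_eq_empty_iff] at hcon
      rcases hcon with h1 | h1
      · exact hne.ne_empty h1
      · exact hns h1
    have hF'uc : UnionClosed F' := by
      intro A hA B hB
      rw [Finset.mem_erase] at *
      refine ⟨?_, huc A hA.2 B hB.2⟩
      simp only [ne_eq, Finset.union_eq_empty]
      exact fun h => hA.1 h.1
    have hF'card : ∀ A ∈ F', 2 ≤ A.card := fun A hA =>
      hcard A (Finset.mem_erase.mp hA).2 (Finset.mem_erase.mp hA).1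
    obtain ⟨x, y, hxy, hx, hy⟩ := h F' hF'ne hF'uc hF'card
    have hfilter : ∀ z : ℕ, F'.filter (fun A => z ∈ A) = F.filter (fun A => z ∈ A) := by
      intro z
      rw [hF', Finset.filter_erase]
      exact Finset.erase_eq_of_notMem (by simp)
    have hcle : F.card ≤ F'.card + 1 := by
      by_cases h0 : ∅ ∈ F
      · rw [hF', Finset.card_erase_add_one h0]
      · rw [hF', Finset.erase_eq_of_notMem h0]; omega
    refine ⟨x, y, hxy, ?_, ?_⟩
    · have := hx; rw [Abundant, hfilter x] at this; omega
    · have := hy; rw [Abundant, hfilter y] at this; omega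
  · intro h F hne huc hcard
    have h0 : ∅ ∉ F := fun h0 => by have := hcard ∅ h0; simp at this
    set F' := insert ∅ F with hF'
    have hF'uc : UnionClosed F' := by
      intro A hA B hB
      rw [hF', Finset.mem_insert] at *
      rcases hA with rfl | hA
      · rcases hB with rfl | hB
        · left; simp
        · right; simpa using hB
      · rcases hB with rfl | hB
        · right; simpa using hA
        · right; exact huc A hA B hB
    have hns : F' ≠ {∅} := by
      intro hcon
      obtain ⟨A, hA⟩ := hne
      have : A ∈ F' := Finset.mem_insert_of_mem hA
      rw [hcon, Finset.mem_singleton] at this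
      have h2 := hcard A hA
      rw [this] at h2
      simp at h2
    obtain ⟨x, y, hxy, hx, hy⟩ := h F' (Finset.insert_nonempty _ _) hF'uc hns
      (fun A hA hA0 => hcard A (by rcases Finset.mem_insert.mp hA with rfl | h; exact absurd rfl hA0; exact h))
    have hfilter : ∀ z : ℕ, F'.filter (fun A => z ∈ A) = F.filter (fun A => z ∈ A) := by
      intro z
      rw [hF', Finset.filter_insert]
      simp
    have hc : F'.card = F.card + 1 := Finset.card_insert_of_notMem h0
    refine ⟨x, y, hxy, ?_, ?_⟩
    · have := hx; rw [hfilter x, hc] at this; exact lt_of_lt_of_le (by omega) this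
    · have := hy; rw [hfilter y, hc] at this; exact lt_of_lt_of_le (by omega) this
end
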